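/- (Generalized Ulam–Hyers–Rassias stability.) Let 0 < α < 1, b > 0, J = [0,b]. Let ψ : J → ℝ be increasing and continuously differentiable with ψ'(z) > 0 for all z ∈ J. Let F : J × ℝ × ℝ → ℝ and H : J × J × ℝ → ℝ be continuous satisfying (Q1) |F(z, u₁, u₂) − F(z, v₁, v₂)| ≤ n(z)(|u₁ − v₁| + |u₂ − v₂|) and (Q2) |H(z, τ, u) − H(z, τ, v)| ≤ k(z)|u − v| for continuous n, k : J → ℝ, and set W₁ = sup_{z ∈ J} |n(z)|, W₂ = sup_{z ∈ J} |k(z)|. Suppose ρ : J → ℝ is a continuous increasing nonnegative function and γ > 0 satisfy (Q3) (1/Γ(α)) ∫₀^z ψ'(κ)(ψ(z) − ψ(κ))^{α−1} ρ(κ) dκ ≤ γ ρ(z) for all z ∈ J, and that W₁(1 + W₂)γ < 1. Let ω : J → ℝ be continuously differentiable with |N^{α,ψ}ω(z) − F(z, ω(z), (1/Γ(α)) ∫₀^z ψ'(τ)(ψ(z) − ψ(τ))^{α−1} H(z, τ, N^{α,ψ}ω(τ)) dτ)| ≤ ρ(z) for all z ∈ J. If ϑ : J → ℝ is a continuously differentiable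 solution of N^{α,ψ}ϑ(z) = F(z, ϑ(z), (1/Γ(α)) ∫₀^z ψ'(τ)(ψ(z) − ψ(τ))^{α−1} H(z, τ, N^{α,ψ}ϑ(τ)) dτ) on J with ϑ(0) = ω(0), then for B = γ / (1 − W₁(1 + W₂)γ) one has |ω(z) − ϑ(z)| ≤ B ρ(z) for all z ∈ J. -/

import Mathlib

open MeasureTheory Set

/-- ψ-Riemann–Liouville fractional integral of order `α` of `f` with respect to `ψ`
(with `ψ'` a given derivative function of `ψ`):
`I^{α,ψ} f (z) = (1/Γ(α)) ∫₀^z ψ'(κ) (ψ(z) - ψ(κ))^(α-1) f(κ) dκ`. -/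
noncomputable def psiInt (α : ℝ) (ψ ψ' f : ℝ → ℝ) (z : ℝ) : ℝ :=
  (1 / Real.Gamma α) * ∫ κ in (0:ℝ)..z, ψ' κ * (ψ z - ψ κ) ^ (α - 1) * f κ

/-- ψ-Caputo fractional derivative of order `α` (for `0 < α < 1`) of a function with
derivative `v'`, with respect to `ψ` (with derivative `ψ'`):
`N^{α,ψ} v (z) = (1/Γ(1-α)) ∫₀^z ψ'(κ) (ψ(z) - ψ(κ))^(-α) (v'(κ)/ψ'(κ)) dκ`. -/
noncomputable def psiCaputo (α : ℝ) (ψ ψ' v' : ℝ → ℝ) (z : ℝ) : ℝ :=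
  (1 / Real.Gamma (1 - α)) * ∫ κ in (0:ℝ)..z, ψ' κ * (ψ z - ψ κ) ^ (-α) * (v' κ / ψ' κ)

/-- Mittag-Leffler function `E_α(x) = ∑_{m=0}^∞ x^m / Γ(α m + 1)`. -/
noncomputable def mittagLeffler (α x : ℝ) : ℝ :=
  ∑' m : ℕ, x ^ m / Real.Gamma (α * m + 1)


open intervalIntegral

lemma aux_indicator_meas {X : Type*} [TopologicalSpace X] [MeasurableSpace X]
    [OpensMeasurableSpace X] {S : Set X} (hS : IsOpen S) {f : X → ℝ}
    (hf : ContinuousOn f S) : Measurable (S.indicator f) := by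
  classical
  refine measurable_of_isOpen fun U hU => ?_
  have hpre : S.indicator f ⁻¹' U =
      (S ∩ f ⁻¹' U) ∪ (if (0:ℝ) ∈ U then Sᶜ else ∅) := by
    ext x
    by_cases hx : x ∈ S <;> by_cases h0 : (0:ℝ) ∈ U <;>
      simp [indicator, hx, h0]
  rw [hpre]
  refine ((hf.isOpen_inter_preimage hS hU).measurableSet).union ?_
  split
  · exact hS.measurableSet.compl
  · exact MeasurableSet.empty

variable {α b m : ℝ} {ψ ψ' : ℝ → ℝ}

lemma aux_image_Ioo {f : ℝ → ℝ} {a c : ℝ} (hac : a ≤ c)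
    (hmono : StrictMonoOn f (Icc a c)) (hcont : ContinuousOn f (Icc a c)) :
    f '' (Ioo a c) = Ioo (f a) (f c) := by
  apply Subset.antisymm
  · rintro y ⟨x, hx, rfl⟩
    exact ⟨hmono ⟨le_refl a, hac⟩ ⟨hx.1.le, hx.2.le⟩ hx.1,
      hmono ⟨hx.1.le, hx.2.le⟩ ⟨hac, le_refl c⟩ hx.2⟩
  · exact intermediate_value_Ioo hac hcont

variable {α b : ℝ} {ψ ψ' : ℝ → ℝ}

lemma aux_kernel (hψ_mono : StrictMonoOn ψ (Set.Icc 0 b))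
    (hψ_deriv : ∀ z ∈ Set.Icc 0 b, HasDerivWithinAt ψ (ψ' z) (Set.Icc 0 b) z)
    (hψ'_pos : ∀ z ∈ Set.Icc 0 b, 0 < ψ' z)
    {β s z : ℝ} (hβ : 0 < β) (hs : 0 ≤ s) (hsz : s ≤ z) (hzb : z ≤ b) :
    IntegrableOn (fun κ => ψ' κ * (ψ z - ψ κ) ^ (β - 1)) (Ioo s z) ∧
      ∫ κ in Ioo s z, ψ' κ * (ψ z - ψ κ) ^ (β - 1) = (ψ z - ψ s) ^ β / β := by
  rcases eq_or_lt_of_le hsz with rfl | hlt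
  · simp [Real.zero_rpow hβ.ne']
  have hsub : Ioo s z ⊆ Icc 0 b := fun x hx => ⟨hs.trans hx.1.le, hx.2.le.trans hzb⟩
  have hsmem : s ∈ Icc (0:ℝ) b := ⟨hs, hsz.trans hzb⟩
  have hzmem : z ∈ Icc (0:ℝ) b := ⟨hs.trans hsz, hzb⟩
  have hψc : ContinuousOn ψ (Icc 0 b) := fun x hx => (hψ_deriv x hx).continuousWithinAt
  have himg : ψ '' (Ioo s z) = Ioo (ψ s) (ψ z) := by
    refine aux_image_Ioo hsz (hψ_mono.mono ?_) (hψc.mono ?_) <;>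
      exact Icc_subset_Icc hs hzb
  have hder : ∀ x ∈ Ioo s z, HasDerivWithinAt ψ (ψ' x) (Ioo s z) x :=
    fun x hx => (hψ_deriv x (hsub hx)).mono hsub
  have hinj : InjOn ψ (Ioo s z) := (hψ_mono.injOn).mono hsub
  have hψlt : ψ s < ψ z := hψ_mono hsmem hzmem hlt
  set g : ℝ → ℝ := fun x => (ψ z - x) ^ (β - 1) with hg
  -- interval integrability of g on (ψ s, ψ z)
  have hgint : IntegrableOn g (Ioo (ψ s) (ψ z)) := by
    have h1 : IntervalIntegrable (fun x : ℝ => x ^ (β - 1)) MeasureTheory.volume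
        (ψ z - ψ s) (ψ z - ψ z) := by
      apply intervalIntegrable_rpow' (by linarith)
    have h2 := h1.comp_sub_left (ψ z)
    simp only [sub_sub_cancel] at h2
    rw [← intervalIntegrable_iff_integrableOn_Ioo_of_le hψlt.le]
    exact h2
  constructor
  · have := (integrableOn_image_iff_integrableOn_abs_deriv_smul measurableSet_Ioo
      hder hinj g).mp (by rwa [himg])
    refine this.congr_fun (fun x hx => ?_) measurableSet_Ioo
    simp only [smul_eq_mul, hg, abs_of_pos (hψ'_pos x (hsub hx))]
  · have key := integral_image_eq_integral_abs_deriv_smul measurableSet_Ioo hder hinj g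
    rw [himg] at key
    have hrhs : ∫ κ in Ioo s z, |ψ' κ| • g (ψ κ) =
        ∫ κ in Ioo s z, ψ' κ * (ψ z - ψ κ) ^ (β - 1) := by
      refine setIntegral_congr_fun measurableSet_Ioo (fun x hx => ?_)
      simp only [smul_eq_mul, hg, abs_of_pos (hψ'_pos x (hsub hx))]
    rw [hrhs] at key
    rw [← key, ← MeasureTheory.integral_Ioc_eq_integral_Ioo,
      ← intervalIntegral.integral_of_le hψlt.le]
    have := intervalIntegral.integral_comp_sub_left (a := ψ s) (b := ψ z)
      (fun x : ℝ => x ^ (β - 1)) (ψ z)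
    simp only [sub_self] at this
    rw [hg]
    simp only []
    rw [this, integral_rpow (Or.inl (by linarith))]
    rw [Real.zero_rpow (by linarith : β - 1 + 1 ≠ 0)]
    ring_nf


lemma aux_mvt (hψ_deriv : ∀ z ∈ Set.Icc 0 b, HasDerivWithinAt ψ (ψ' z) (Set.Icc 0 b) z)
    (hψ'_cont : ContinuousOn ψ' (Set.Icc 0 b))
    (hm : ∀ x ∈ Set.Icc 0 b, m ≤ ψ' x)
    {s z : ℝ} (hs : 0 ≤ s) (hsz : s ≤ z) (hzb : z ≤ b) :
    m * (z - s) ≤ ψ z - ψ s := by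
  have hsub : Icc s z ⊆ Icc 0 b := Icc_subset_Icc hs hzb
  have hψc : ContinuousOn ψ (Icc 0 b) := fun x hx => (hψ_deriv x hx).continuousWithinAt
  have hFTC : ∫ κ in s..z, ψ' κ = ψ z - ψ s := by
    refine intervalIntegral.integral_eq_sub_of_hasDeriv_right_of_le hsz (hψc.mono hsub)
      (fun x hx => ?_) ((hψ'_cont.mono hsub).intervalIntegrable_of_Icc hsz)
    have hmem : Icc (0:ℝ) b ∈ nhds x :=
      Icc_mem_nhds (lt_of_le_of_lt hs hx.1) (lt_of_lt_of_le hx.2 hzb)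
    exact ((hψ_deriv x (hsub (Ioo_subset_Icc_self hx))).hasDerivAt hmem).hasDerivWithinAt
  have : ∫ κ in s..z, m ≤ ∫ κ in s..z, ψ' κ := by
    refine intervalIntegral.integral_mono_on hsz intervalIntegrable_const
      ((hψ'_cont.mono hsub).intervalIntegrable_of_Icc hsz) (fun x hx => hm x (hsub hx))
  simpa [hFTC, intervalIntegral.integral_const, smul_eq_mul, mul_comm] using this

lemma aux_dom_int (hψ_mono : StrictMonoOn ψ (Set.Icc 0 b))
    (hψ_deriv : ∀ z ∈ Set.Icc 0 b, HasDerivWithinAt ψ (ψ' z) (Set.Icc 0 b) z)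
    (hψ'_cont : ContinuousOn ψ' (Set.Icc 0 b))
    (hm0 : 0 < m) (hm : ∀ x ∈ Set.Icc 0 b, m ≤ ψ' x)
    {β z : ℝ} (hβ0 : 0 < β) (hβ1 : β ≤ 1) (hz0 : 0 ≤ z) (hzb : z ≤ b)
    {h : ℝ → ℝ} (hmeas : AEStronglyMeasurable h (volume.restrict (Ioo 0 z)))
    {C : ℝ} (hC : ∀ κ ∈ Ioo 0 z, |h κ| ≤ C) :
    IntegrableOn (fun κ => (ψ z - ψ κ) ^ (β - 1) * h κ) (Ioo 0 z) := by
  have hψc : ContinuousOn ψ (Icc 0 b) := fun x hx => (hψ_deriv x hx).continuousWithinAt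
  have hsub : Ioo (0:ℝ) z ⊆ Icc 0 b := fun x hx => ⟨hx.1.le, hx.2.le.trans hzb⟩
  have hzmem : z ∈ Icc (0:ℝ) b := ⟨hz0, hzb⟩
  have hbase : ∀ κ ∈ Ioo (0:ℝ) z, 0 < ψ z - ψ κ := fun κ hκ =>
    sub_pos.2 (hψ_mono (hsub hκ) hzmem hκ.2)
  have hker_cont : ContinuousOn (fun κ => (ψ z - ψ κ) ^ (β - 1)) (Ioo 0 z) := by
    refine ContinuousOn.rpow_const (continuousOn_const.sub (hψc.mono hsub))
      (fun x hx => Or.inl (hbase x hx).ne')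
  refine Integrable.mono' (g := fun κ => (C * m ^ (β - 1)) * (z - κ) ^ (β - 1)) ?_
    ((hker_cont.aestronglyMeasurable measurableSet_Ioo).mul hmeas) ?_
  · refine Integrable.const_mul ?_ _
    have h1 : IntervalIntegrable (fun x : ℝ => x ^ (β - 1)) MeasureTheory.volume
        (z - 0) (z - z) := intervalIntegrable_rpow' (by linarith)
    have h2 := h1.comp_sub_left z
    simp only [sub_sub_cancel, sub_zero, sub_self] at h2
    exact (intervalIntegrable_iff_integrableOn_Ioo_of_le hz0).mp h2
  · rw [ae_restrict_iff' measurableSet_Ioo]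
    refine ae_of_all _ (fun κ hκ => ?_)
    have h1 : 0 < z - κ := sub_pos.2 hκ.2
    have h2 : m * (z - κ) ≤ ψ z - ψ κ :=
      aux_mvt hψ_deriv hψ'_cont hm hκ.1.le hκ.2.le hzb
    have h3 : (ψ z - ψ κ) ^ (β - 1) ≤ (m * (z - κ)) ^ (β - 1) :=
      Real.rpow_le_rpow_of_nonpos (by positivity) h2 (by linarith)
    have h4 : (0:ℝ) ≤ (ψ z - ψ κ) ^ (β - 1) := (Real.rpow_pos_of_pos (hbase κ hκ) _).le
    have h5 : |h κ| ≤ C := hC κ hκ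
    have hC0 : 0 ≤ C := (abs_nonneg _).trans h5
    calc ‖(ψ z - ψ κ) ^ (β - 1) * h κ‖ = (ψ z - ψ κ) ^ (β - 1) * |h κ| := by
          rw [Real.norm_eq_abs, abs_mul, abs_of_nonneg h4]
      _ ≤ (m * (z - κ)) ^ (β - 1) * C := by
          exact mul_le_mul h3 h5 (abs_nonneg _) (Real.rpow_nonneg (by positivity) _)
      _ = C * m ^ (β - 1) * (z - κ) ^ (β - 1) := by
          rw [Real.mul_rpow hm0.le h1.le]; ring

lemma aux_rpow_integral {β z : ℝ} (hβ0 : 0 < β) (hz0 : 0 ≤ z) :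
    ∫ κ in Ioo 0 z, (z - κ) ^ (β - 1) = z ^ β / β := by
  rw [← MeasureTheory.integral_Ioc_eq_integral_Ioo, ← intervalIntegral.integral_of_le hz0]
  have := intervalIntegral.integral_comp_sub_left (a := (0:ℝ)) (b := z)
    (fun x : ℝ => x ^ (β - 1)) z
  simp only [sub_self, sub_zero] at this
  rw [this, integral_rpow (Or.inl (by linarith))]
  rw [Real.zero_rpow (by linarith : β - 1 + 1 ≠ 0)]
  ring_nf

lemma aux_dom_bound (hψ_mono : StrictMonoOn ψ (Set.Icc 0 b))
    (hψ_deriv : ∀ z ∈ Set.Icc 0 b, HasDerivWithinAt ψ (ψ' z) (Set.Icc 0 b) z)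
    (hψ'_cont : ContinuousOn ψ' (Set.Icc 0 b))
    (hm0 : 0 < m) (hm : ∀ x ∈ Set.Icc 0 b, m ≤ ψ' x)
    {β z : ℝ} (hβ0 : 0 < β) (hβ1 : β ≤ 1) (hz0 : 0 ≤ z) (hzb : z ≤ b)
    {h : ℝ → ℝ} (hmeas : AEStronglyMeasurable h (volume.restrict (Ioo 0 z)))
    {C : ℝ} (hC : ∀ κ ∈ Ioo 0 z, |h κ| ≤ C) :
    ∫ κ in Ioo 0 z, |(ψ z - ψ κ) ^ (β - 1) * h κ| ≤ C * m ^ (β - 1) * (z ^ β / β) := by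
  have hint := aux_dom_int hψ_mono hψ_deriv hψ'_cont hm0 hm hβ0 hβ1 hz0 hzb hmeas hC
  have hgint : IntegrableOn (fun κ => (C * m ^ (β - 1)) * (z - κ) ^ (β - 1)) (Ioo 0 z) := by
    refine Integrable.const_mul ?_ _
    have h1 : IntervalIntegrable (fun x : ℝ => x ^ (β - 1)) MeasureTheory.volume
        (z - 0) (z - z) := intervalIntegrable_rpow' (by linarith)
    have h2 := h1.comp_sub_left z
    simp only [sub_sub_cancel, sub_zero, sub_self] at h2
    exact (intervalIntegrable_iff_integrableOn_Ioo_of_le hz0).mp h2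
  have hsub : Ioo (0:ℝ) z ⊆ Icc 0 b := fun x hx => ⟨hx.1.le, hx.2.le.trans hzb⟩
  have hbase : ∀ κ ∈ Ioo (0:ℝ) z, 0 < ψ z - ψ κ := fun κ hκ =>
    sub_pos.2 (hψ_mono (hsub hκ) ⟨hz0, hzb⟩ hκ.2)
  calc ∫ κ in Ioo 0 z, |(ψ z - ψ κ) ^ (β - 1) * h κ|
      ≤ ∫ κ in Ioo 0 z, (C * m ^ (β - 1)) * (z - κ) ^ (β - 1) := by
        refine setIntegral_mono_on hint.abs hgint measurableSet_Ioo (fun κ hκ => ?_)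
        have h1 : 0 < z - κ := sub_pos.2 hκ.2
        have h2 : m * (z - κ) ≤ ψ z - ψ κ :=
          aux_mvt hψ_deriv hψ'_cont hm hκ.1.le hκ.2.le hzb
        have h3 : (ψ z - ψ κ) ^ (β - 1) ≤ (m * (z - κ)) ^ (β - 1) :=
          Real.rpow_le_rpow_of_nonpos (by positivity) h2 (by linarith)
        have h4 : (0:ℝ) ≤ (ψ z - ψ κ) ^ (β - 1) := (Real.rpow_pos_of_pos (hbase κ hκ) _).le
        have h5 : |h κ| ≤ C := hC κ hκ
        calc |(ψ z - ψ κ) ^ (β - 1) * h κ| = (ψ z - ψ κ) ^ (β - 1) * |h κ| := by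
              rw [abs_mul, abs_of_nonneg h4]
          _ ≤ (m * (z - κ)) ^ (β - 1) * C :=
              mul_le_mul h3 h5 (abs_nonneg _) (Real.rpow_nonneg (by positivity) _)
          _ = C * m ^ (β - 1) * (z - κ) ^ (β - 1) := by
              rw [Real.mul_rpow hm0.le h1.le]; ring
    _ = C * m ^ (β - 1) * (z ^ β / β) := by
        rw [MeasureTheory.integral_const_mul, aux_rpow_integral hβ0 hz0]

lemma aux_beta_integrable {α : ℝ} (hα0 : 0 < α) (hα1 : α < 1) :
    IntegrableOn (fun t : ℝ => t ^ (-α) * (1 - t) ^ (α - 1)) (Ioo (0:ℝ) 1) := by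
  rw [← intervalIntegrable_iff_integrableOn_Ioo_of_le (by norm_num : (0:ℝ) ≤ 1)]
  have h1 : IntervalIntegrable (fun t : ℝ => t ^ (-α) * (1 - t) ^ (α - 1))
      MeasureTheory.volume 0 (1/2) := by
    refine IntervalIntegrable.mul_continuousOn (intervalIntegrable_rpow' (by linarith)) ?_
    refine ContinuousOn.rpow_const (continuousOn_const.sub continuousOn_id) (fun x hx => ?_)
    rw [uIcc_of_le (by norm_num : (0:ℝ) ≤ 1/2)] at hx
    refine Or.inl (ne_of_gt ?_)
    show (0:ℝ) < 1 - x
    linarith [hx.2]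
  have h2 : IntervalIntegrable (fun t : ℝ => t ^ (-α) * (1 - t) ^ (α - 1))
      MeasureTheory.volume (1/2) 1 := by
    refine IntervalIntegrable.continuousOn_mul ?_ ?_
    · have hi : IntervalIntegrable (fun x : ℝ => x ^ (α - 1)) MeasureTheory.volume
        (1 - 1/2) (1 - 1) := intervalIntegrable_rpow' (by linarith)
      have := hi.comp_sub_left 1
      simpa using this
    · refine ContinuousOn.rpow_const continuousOn_id (fun x hx => ?_)
      rw [uIcc_of_le (by norm_num : (1:ℝ)/2 ≤ 1)] at hx
      refine Or.inl (ne_of_gt ?_)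
      show (0:ℝ) < x
      linarith [hx.1]
  exact h1.trans h2

lemma aux_beta_value {α : ℝ} (hα0 : 0 < α) (hα1 : α < 1) :
    ∫ t in Ioo (0:ℝ) 1, t ^ (-α) * (1 - t) ^ (α - 1) =
      Real.Gamma (1 - α) * Real.Gamma α := by
  have hβ := Complex.Gamma_mul_Gamma_eq_betaIntegral
    (by rw [Complex.ofReal_re]; linarith : 0 < (Complex.ofReal (1 - α)).re)
    (by rw [Complex.ofReal_re]; linarith : 0 < (Complex.ofReal α).re)
  rw [Complex.betaIntegral] at hβ
  have h1 : (Complex.ofReal (1 - α)) + (Complex.ofReal α) = 1 := by push_cast; ring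
  rw [h1, Complex.Gamma_one, one_mul, Complex.Gamma_ofReal, Complex.Gamma_ofReal,
    ← Complex.ofReal_mul] at hβ
  have hcast : ∀ x ∈ Set.uIcc (0:ℝ) 1,
      ((fun t : ℝ => ((t ^ (-α) * (1 - t) ^ (α - 1) : ℝ) : ℂ)) x) =
      (fun x : ℝ => (x:ℂ) ^ ((Complex.ofReal (1 - α)) - 1) *
        ((1:ℂ) - x) ^ ((Complex.ofReal α) - 1)) x := by
    intro x hx
    rw [uIcc_of_le (by norm_num : (0:ℝ) ≤ 1)] at hx
    have hx0 : (0:ℝ) ≤ x := hx.1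
    have hx1 : (0:ℝ) ≤ 1 - x := by linarith [hx.2]
    simp only [Complex.ofReal_mul]
    rw [Complex.ofReal_cpow hx0, Complex.ofReal_cpow hx1]
    push_cast
    ring_nf
  have h2 : ((∫ t in (0:ℝ)..1, t ^ (-α) * (1 - t) ^ (α - 1) : ℝ) : ℂ)
      = ∫ x in (0:ℝ)..1, (x:ℂ) ^ ((Complex.ofReal (1 - α)) - 1) *
        ((1:ℂ) - x) ^ ((Complex.ofReal α) - 1) := by
    rw [← intervalIntegral.integral_ofReal]
    exact intervalIntegral.integral_congr hcast
  have h3 : ((∫ t in (0:ℝ)..1, t ^ (-α) * (1 - t) ^ (α - 1) : ℝ) : ℂ)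
      = ((Real.Gamma (1 - α) * Real.Gamma α : ℝ) : ℂ) := by rw [h2, ← hβ]
  have h4 := Complex.ofReal_inj.mp h3
  rw [← h4, intervalIntegral.integral_of_le (by norm_num : (0:ℝ) ≤ 1),
    MeasureTheory.integral_Ioc_eq_integral_Ioo]
lemma aux_affine {A C : ℝ} (hAC : A < C) (g : ℝ → ℝ) :
    (∫ x in Ioo A C, g x) = ∫ t in Ioo (0:ℝ) 1, (C - A) * g (A + (C - A) * t) ∧
    (IntegrableOn g (Ioo A C) ↔
      IntegrableOn (fun t => (C - A) * g (A + (C - A) * t)) (Ioo (0:ℝ) 1)) := by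
  set φ : ℝ → ℝ := fun t => A + (C - A) * t with hφ
  have hder : ∀ t ∈ Ioo (0:ℝ) 1, HasDerivWithinAt φ (C - A) (Ioo (0:ℝ) 1) t := by
    intro t ht
    have := ((hasDerivAt_id t).const_mul (C - A)).const_add A
    rw [mul_one] at this
    exact this.hasDerivWithinAt
  have hmono : StrictMonoOn φ (Icc (0:ℝ) 1) := by
    intro x hx y hy hxy
    simp only [hφ]
    nlinarith
  have hinj : Set.InjOn φ (Ioo (0:ℝ) 1) := hmono.injOn.mono Ioo_subset_Icc_self
  have hcont : ContinuousOn φ (Icc (0:ℝ) 1) :=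
    (continuous_const.add (continuous_const.mul continuous_id)).continuousOn
  have himg : φ '' (Ioo 0 1) = Ioo A C := by
    rw [aux_image_Ioo (by norm_num) hmono hcont]
    simp [hφ, hAC]
  constructor
  · have key := integral_image_eq_integral_abs_deriv_smul measurableSet_Ioo hder hinj g
    rw [himg] at key
    rw [key]
    refine setIntegral_congr_fun measurableSet_Ioo (fun t ht => ?_)
    rw [smul_eq_mul, abs_of_pos (sub_pos.2 hAC)]
  · have key := integrableOn_image_iff_integrableOn_abs_deriv_smul measurableSet_Ioo hder hinj g
    rw [himg] at key
    rw [key]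
    constructor <;> intro h <;> refine h.congr_fun (fun t ht => ?_) measurableSet_Ioo <;>
      dsimp only <;> rw [smul_eq_mul, abs_of_pos (sub_pos.2 hAC)]


/-- The inner Beta-type integral over `(s, z)`. -/
lemma aux_inner_beta (hα0 : 0 < α) (hα1 : α < 1)
    (hψ_mono : StrictMonoOn ψ (Set.Icc 0 b))
    (hψ_deriv : ∀ z ∈ Set.Icc 0 b, HasDerivWithinAt ψ (ψ' z) (Set.Icc 0 b) z)
    (hψ'_pos : ∀ z ∈ Set.Icc 0 b, 0 < ψ' z)
    {s z : ℝ} (hs : 0 ≤ s) (hsz : s < z) (hzb : z ≤ b) :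
    IntegrableOn
      (fun κ => ψ' κ * ((ψ z - ψ κ) ^ (α - 1) * (ψ κ - ψ s) ^ (-α))) (Ioo s z) ∧
    ∫ κ in Ioo s z, ψ' κ * ((ψ z - ψ κ) ^ (α - 1) * (ψ κ - ψ s) ^ (-α))
      = Real.Gamma (1 - α) * Real.Gamma α := by
  have hψc : ContinuousOn ψ (Icc 0 b) := fun x hx => (hψ_deriv x hx).continuousWithinAt
  have hsub : Ioo s z ⊆ Icc 0 b := fun x hx => ⟨hs.trans hx.1.le, hx.2.le.trans hzb⟩
  have hsmem : s ∈ Icc (0:ℝ) b := ⟨hs, hsz.le.trans hzb⟩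
  have hzmem : z ∈ Icc (0:ℝ) b := ⟨hs.trans hsz.le, hzb⟩
  have hψlt : ψ s < ψ z := hψ_mono hsmem hzmem hsz
  set A := ψ s
  set C := ψ z
  set g : ℝ → ℝ := fun x => (C - x) ^ (α - 1) * (x - A) ^ (-α) with hg
  -- step 1 : change variables via ψ
  have hder : ∀ x ∈ Ioo s z, HasDerivWithinAt ψ (ψ' x) (Ioo s z) x :=
    fun x hx => (hψ_deriv x (hsub hx)).mono hsub
  have hinj : InjOn ψ (Ioo s z) := (hψ_mono.injOn).mono hsub
  have himg : ψ '' (Ioo s z) = Ioo A C := by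
    refine aux_image_Ioo hsz.le (hψ_mono.mono ?_) (hψc.mono ?_) <;>
      exact Icc_subset_Icc hs hzb
  -- step 2 : affine change of variables
  have haff := aux_affine hψlt g
  -- the Ioo 0 1 integrand equals the Beta integrand
  have heq : ∀ t ∈ Ioo (0:ℝ) 1,
      (C - A) * g (A + (C - A) * t) = t ^ (-α) * (1 - t) ^ (α - 1) := by
    intro t ht
    have hD : 0 < C - A := sub_pos.2 hψlt
    have h1 : C - (A + (C - A) * t) = (C - A) * (1 - t) := by ring
    have h2 : (A + (C - A) * t) - A = (C - A) * t := by ring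
    rw [hg]
    simp only [h1, h2]
    rw [Real.mul_rpow hD.le (by linarith [ht.2] : (0:ℝ) ≤ 1 - t),
      Real.mul_rpow hD.le ht.1.le]
    have h3 : (C - A) * ((C - A) ^ (α - 1) * ((C - A) ^ (-α))) = 1 := by
      rw [← Real.rpow_add hD]
      have he : α - 1 + -α = -1 := by ring
      rw [he, Real.rpow_neg_one]
      exact mul_inv_cancel₀ hD.ne'
    calc (C - A) * ((C - A) ^ (α - 1) * (1 - t) ^ (α - 1) * ((C - A) ^ (-α) * t ^ (-α)))
        = ((C - A) * ((C - A) ^ (α - 1) * (C - A) ^ (-α))) * ((1 - t) ^ (α - 1) * t ^ (-α)) := by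
          ring
      _ = t ^ (-α) * (1 - t) ^ (α - 1) := by rw [h3]; ring
  have hbetaI := aux_beta_integrable hα0 hα1
  have hbetaV := aux_beta_value hα0 hα1
  have hgI : IntegrableOn g (Ioo A C) := by
    rw [haff.2]
    exact hbetaI.congr_fun (fun t ht => (heq t ht).symm) measurableSet_Ioo
  have hgV : ∫ x in Ioo A C, g x = Real.Gamma (1 - α) * Real.Gamma α := by
    rw [haff.1, ← hbetaV]
    exact setIntegral_congr_fun measurableSet_Ioo heq
  constructor
  · have := (integrableOn_image_iff_integrableOn_abs_deriv_smul measurableSet_Ioo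
      hder hinj g).mp (by rwa [himg])
    refine this.congr_fun (fun x hx => ?_) measurableSet_Ioo
    simp only [smul_eq_mul, hg, abs_of_pos (hψ'_pos x (hsub hx))]
  · have key := integral_image_eq_integral_abs_deriv_smul measurableSet_Ioo hder hinj g
    rw [himg, hgV] at key
    have hrhs : ∫ x in Ioo s z, |ψ' x| • g (ψ x)
        = ∫ κ in Ioo s z, ψ' κ * ((C - ψ κ) ^ (α - 1) * (ψ κ - A) ^ (-α)) := by
      refine setIntegral_congr_fun measurableSet_Ioo (fun x hx => ?_)
      simp only [smul_eq_mul, hg, abs_of_pos (hψ'_pos x (hsub hx))]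
    rw [hrhs] at key
    exact key.symm
/-- rewrite `psiCaputo` as a set integral with the `ψ'` cancelled -/
lemma aux_caputo_Ioo (hψ'_pos : ∀ x ∈ Set.Icc 0 b, 0 < ψ' x)
    {g : ℝ → ℝ} {κ : ℝ} (hκ0 : 0 ≤ κ) (hκb : κ ≤ b) :
    psiCaputo α ψ ψ' g κ =
      (1 / Real.Gamma (1 - α)) * ∫ s in Ioo 0 κ, (ψ κ - ψ s) ^ (-α) * g s := by
  rw [psiCaputo, intervalIntegral.integral_of_le hκ0,
    MeasureTheory.integral_Ioc_eq_integral_Ioo]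
  congr 1
  refine setIntegral_congr_fun measurableSet_Ioo (fun s hs => ?_)
  have hne : ψ' s ≠ 0 := (hψ'_pos s ⟨hs.1.le, hs.2.le.trans hκb⟩).ne'
  field_simp

/-- FTC for the ψ-fractional operators: `I^α (N^α u) = u - u 0`. -/
lemma aux_ftc (hα0 : 0 < α) (hα1 : α < 1)
    (hψ_mono : StrictMonoOn ψ (Set.Icc 0 b))
    (hψ_deriv : ∀ x ∈ Set.Icc 0 b, HasDerivWithinAt ψ (ψ' x) (Set.Icc 0 b) x)
    (hψ'_cont : ContinuousOn ψ' (Set.Icc 0 b))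
    (hψ'_pos : ∀ x ∈ Set.Icc 0 b, 0 < ψ' x)
    (hm0 : 0 < m) (hm : ∀ x ∈ Set.Icc 0 b, m ≤ ψ' x)
    {u u' : ℝ → ℝ}
    (hu_deriv : ∀ x ∈ Set.Icc 0 b, HasDerivWithinAt u (u' x) (Set.Icc 0 b) x)
    (hu'_cont : ContinuousOn u' (Set.Icc 0 b))
    {z : ℝ} (hz0 : 0 ≤ z) (hzb : z ≤ b) :
    psiInt α ψ ψ' (fun τ => psiCaputo α ψ ψ' u' τ) z = u z - u 0 := by
  rcases eq_or_lt_of_le hz0 with rfl | hzpos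
  · simp [psiInt]
  have hψc : ContinuousOn ψ (Icc 0 b) := fun x hx => (hψ_deriv x hx).continuousWithinAt
  have hΓa : 0 < Real.Gamma α := Real.Gamma_pos_of_pos hα0
  have hΓb : 0 < Real.Gamma (1 - α) := Real.Gamma_pos_of_pos (by linarith)
  have hzsub : Ioo (0:ℝ) z ⊆ Icc 0 b := fun x hx => ⟨hx.1.le, hx.2.le.trans hzb⟩
  obtain ⟨Cu, hCu⟩ := isCompact_Icc.exists_bound_of_continuousOn hu'_cont
  have hCu0 : 0 ≤ Cu := le_trans (norm_nonneg _) (hCu 0 ⟨le_refl 0, hz0.trans hzb⟩)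
  have hexp : ((1:ℝ) - α - 1) = -α := by ring
  -- the double-integral integrand
  set T : Set (ℝ × ℝ) := {p | 0 < p.2 ∧ p.2 < p.1 ∧ p.1 < z} with hT
  set Pf : ℝ × ℝ → ℝ := fun p =>
    ψ' p.1 * (ψ z - ψ p.1) ^ (α - 1) * ((ψ p.1 - ψ p.2) ^ (-α) * u' p.2) with hPf
  have hTopen : IsOpen T := by
    have h1 : IsOpen {p : ℝ × ℝ | 0 < p.2} := isOpen_lt continuous_const continuous_snd
    have h2 : IsOpen {p : ℝ × ℝ | p.2 < p.1} := isOpen_lt continuous_snd continuous_fst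
    have h3 : IsOpen {p : ℝ × ℝ | p.1 < z} := isOpen_lt continuous_fst continuous_const
    have : T = {p : ℝ × ℝ | 0 < p.2} ∩ ({p : ℝ × ℝ | p.2 < p.1} ∩ {p : ℝ × ℝ | p.1 < z}) := by
      ext p; simp [hT, mem_setOf_eq, and_assoc]
    rw [this]; exact h1.inter (h2.inter h3)
  have hTIcc1 : ∀ p ∈ T, p.1 ∈ Icc (0:ℝ) b := fun p hp =>
    ⟨(hp.1.trans hp.2.1).le, hp.2.2.le.trans hzb⟩
  have hTIcc2 : ∀ p ∈ T, p.2 ∈ Icc (0:ℝ) b := fun p hp =>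
    ⟨hp.1.le, (hp.2.1.trans hp.2.2).le.trans hzb⟩
  have hPfcont : ContinuousOn Pf T := by
    have hc1 : ContinuousOn (fun p : ℝ × ℝ => ψ' p.1) T :=
      hψ'_cont.comp continuous_fst.continuousOn hTIcc1
    have hcψ1 : ContinuousOn (fun p : ℝ × ℝ => ψ p.1) T :=
      hψc.comp continuous_fst.continuousOn hTIcc1
    have hcψ2 : ContinuousOn (fun p : ℝ × ℝ => ψ p.2) T :=
      hψc.comp continuous_snd.continuousOn hTIcc2
    have hcu : ContinuousOn (fun p : ℝ × ℝ => u' p.2) T :=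
      hu'_cont.comp continuous_snd.continuousOn hTIcc2
    have hzmem : z ∈ Icc (0:ℝ) b := ⟨hz0, hzb⟩
    have hk1 : ContinuousOn (fun p : ℝ × ℝ => (ψ z - ψ p.1) ^ (α - 1)) T := by
      refine ContinuousOn.rpow_const (continuousOn_const.sub hcψ1) (fun p hp => Or.inl ?_)
      exact (sub_pos.2 (hψ_mono (hTIcc1 p hp) hzmem hp.2.2)).ne'
    have hk2 : ContinuousOn (fun p : ℝ × ℝ => (ψ p.1 - ψ p.2) ^ (-α)) T := by
      refine ContinuousOn.rpow_const (hcψ1.sub hcψ2) (fun p hp => Or.inl ?_)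
      exact (sub_pos.2 (hψ_mono (hTIcc2 p hp) (hTIcc1 p hp) hp.2.1)).ne'
    exact ((hc1.mul hk1).mul (hk2.mul hcu))
  have hmeasP : Measurable (T.indicator Pf) := aux_indicator_meas hTopen hPfcont
  set fc : ℝ → ℝ → ℝ := fun κ s => T.indicator Pf (κ, s) with hfc
  have hfc_unc : Function.uncurry fc = T.indicator Pf := rfl
  -- sections
  have hsec_mem : ∀ κ ∈ Ioo (0:ℝ) z, (fun s => fc κ s) =
      (Ioo (0:ℝ) κ).indicator (fun s =>
        ψ' κ * (ψ z - ψ κ) ^ (α - 1) * ((ψ κ - ψ s) ^ (-α) * u' s)) := by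
    intro κ hκ
    funext s
    by_cases hs : s ∈ Ioo (0:ℝ) κ
    · rw [indicator_of_mem hs]
      have : (κ, s) ∈ T := ⟨hs.1, hs.2, hκ.2⟩
      exact indicator_of_mem this Pf
    · rw [indicator_of_notMem hs]
      have : (κ, s) ∉ T := by
        intro hmem; exact hs ⟨hmem.1, hmem.2.1⟩
      exact indicator_of_notMem this Pf
  have hsec_zero : ∀ κ, κ ∉ Ioo (0:ℝ) z → (fun s => fc κ s) = fun _ => 0 := by
    intro κ hκ
    funext s
    have : (κ, s) ∉ T := by
      intro hmem
      exact hκ ⟨hmem.1.trans hmem.2.1, hmem.2.2⟩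
    exact indicator_of_notMem this Pf
  -- integrability of the sections
  have hsec_int : ∀ κ, Integrable (fun s => fc κ s) := by
    intro κ
    by_cases hκ : κ ∈ Ioo (0:ℝ) z
    · rw [hsec_mem κ hκ]
      rw [integrable_indicator_iff measurableSet_Ioo]
      have hmeasu : AEStronglyMeasurable u' (volume.restrict (Ioo 0 κ)) :=
        (hu'_cont.mono (fun x hx => ⟨hx.1.le, hx.2.le.trans (hκ.2.le.trans hzb)⟩)).aestronglyMeasurable
          measurableSet_Ioo
      have hint := aux_dom_int (β := 1 - α) hψ_mono hψ_deriv hψ'_cont hm0 hm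
        (by linarith) (by linarith) hκ.1.le (hκ.2.le.trans hzb) hmeasu
        (C := Cu) (fun s hs => hCu s ⟨hs.1.le, hs.2.le.trans (hκ.2.le.trans hzb)⟩)
      rw [hexp] at hint
      have h2 := hint.const_mul (ψ' κ * (ψ z - ψ κ) ^ (α - 1))
      refine IntegrableOn.congr_fun h2 (fun s hs => ?_) measurableSet_Ioo
      ring
    · rw [hsec_zero κ hκ]
      exact integrable_zero _ _ _
  -- bound for the iterated norms
  have hker := aux_kernel (β := α) hψ_mono hψ_deriv hψ'_pos hα0 (le_refl 0) hz0 hzb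
  set CB : ℝ := Cu * m ^ (-α) * (b ^ (1 - α) / (1 - α)) with hCB
  have hCB0 : 0 ≤ CB := by
    have h1 : (0:ℝ) ≤ m ^ (-α) := (Real.rpow_pos_of_pos hm0 _).le
    have hb0 : (0:ℝ) ≤ b := hz0.trans hzb
    have h2 : (0:ℝ) ≤ b ^ (1 - α) := Real.rpow_nonneg hb0 _
    have h3 : (0:ℝ) ≤ (1 - α) := by linarith
    rw [hCB]
    exact mul_nonneg (mul_nonneg hCu0 h1) (div_nonneg h2 h3)
  have hnormbound : ∀ κ ∈ Ioo (0:ℝ) z,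
      (∫ s, ‖fc κ s‖) ≤ ψ' κ * (ψ z - ψ κ) ^ (α - 1) * CB := by
    intro κ hκ
    have hκb : κ ≤ b := hκ.2.le.trans hzb
    have hmeasu : AEStronglyMeasurable u' (volume.restrict (Ioo 0 κ)) :=
      (hu'_cont.mono (fun x hx => ⟨hx.1.le, hx.2.le.trans hκb⟩)).aestronglyMeasurable
        measurableSet_Ioo
    have hdb := aux_dom_bound (β := 1 - α) hψ_mono hψ_deriv hψ'_cont hm0 hm
      (by linarith) (by linarith) hκ.1.le hκb hmeasu
      (C := Cu) (fun s hs => hCu s ⟨hs.1.le, hs.2.le.trans hκb⟩)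
    rw [hexp] at hdb
    have hc0 : 0 ≤ ψ' κ * (ψ z - ψ κ) ^ (α - 1) := by
      have h1 := (hψ'_pos κ (hzsub hκ)).le
      have h2 : (0:ℝ) ≤ (ψ z - ψ κ) ^ (α - 1) := Real.rpow_nonneg
        (sub_nonneg.2 ((hψ_mono.monotoneOn) (hzsub hκ) ⟨hz0, hzb⟩ hκ.2.le)) _
      positivity
    calc ∫ s, ‖fc κ s‖
        = ∫ s in Ioo (0:ℝ) κ, ψ' κ * (ψ z - ψ κ) ^ (α - 1) *
            |(ψ κ - ψ s) ^ (-α) * u' s| := by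
          rw [← MeasureTheory.integral_indicator measurableSet_Ioo]
          congr 1
          funext s
          rw [show fc κ s = (Ioo (0:ℝ) κ).indicator (fun s =>
            ψ' κ * (ψ z - ψ κ) ^ (α - 1) * ((ψ κ - ψ s) ^ (-α) * u' s)) s from
            congrFun (hsec_mem κ hκ) s]
          by_cases hs : s ∈ Ioo (0:ℝ) κ
          · rw [indicator_of_mem hs, indicator_of_mem hs, Real.norm_eq_abs, abs_mul,
              abs_of_nonneg hc0]
          · rw [indicator_of_notMem hs, indicator_of_notMem hs, norm_zero]
      _ = ψ' κ * (ψ z - ψ κ) ^ (α - 1) *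
            ∫ s in Ioo (0:ℝ) κ, |(ψ κ - ψ s) ^ (-α) * u' s| := by
          rw [MeasureTheory.integral_const_mul]
      _ ≤ ψ' κ * (ψ z - ψ κ) ^ (α - 1) * (Cu * m ^ (-α) * (κ ^ (1 - α) / (1 - α))) := by
          refine mul_le_mul_of_nonneg_left hdb hc0
      _ ≤ ψ' κ * (ψ z - ψ κ) ^ (α - 1) * CB := by
          refine mul_le_mul_of_nonneg_left ?_ hc0
          rw [hCB]
          have h1 : κ ^ (1 - α) ≤ b ^ (1 - α) :=
            Real.rpow_le_rpow hκ.1.le hκb (by linarith)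
          have h2 : (0:ℝ) ≤ Cu * m ^ (-α) := by positivity
          have h3 : (0:ℝ) < 1 - α := by linarith
          have h4 : κ ^ (1 - α) / (1 - α) ≤ b ^ (1 - α) / (1 - α) :=
            (div_le_div_iff_of_pos_right h3).mpr h1
          exact mul_le_mul_of_nonneg_left h4 h2
  -- joint integrability
  have hSM : StronglyMeasurable (T.indicator Pf) := hmeasP.stronglyMeasurable
  have hInt : Integrable (Function.uncurry fc) ((volume : Measure ℝ).prod volume) := by
    rw [hfc_unc]
    rw [MeasureTheory.integrable_prod_iff hSM.aestronglyMeasurable]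
    constructor
    · exact MeasureTheory.ae_of_all _ (fun κ => hsec_int κ)
    · have hD : Integrable ((Ioo (0:ℝ) z).indicator
          (fun κ => ψ' κ * (ψ z - ψ κ) ^ (α - 1) * CB)) := by
        rw [integrable_indicator_iff measurableSet_Ioo]
        exact hker.1.mul_const CB
      refine hD.mono' ?_ ?_
      · exact (hSM.norm.integral_prod_right').aestronglyMeasurable
      · refine MeasureTheory.ae_of_all _ (fun κ => ?_)
        by_cases hκ : κ ∈ Ioo (0:ℝ) z
        · rw [Real.norm_eq_abs, abs_of_nonneg
            (MeasureTheory.integral_nonneg (fun s => norm_nonneg _)),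
            indicator_of_mem hκ]
          exact hnormbound κ hκ
        · rw [indicator_of_notMem hκ]
          have hz' : ∀ s : ℝ, T.indicator Pf (κ, s) = (0:ℝ) :=
            fun s => congrFun (hsec_zero κ hκ) s
          simp [hz']
  have hswap := MeasureTheory.integral_integral_swap hInt
  -- identify the left side
  have hL : (∫ κ, ∫ s, fc κ s) =
      ∫ κ in Ioo (0:ℝ) z, ψ' κ * (ψ z - ψ κ) ^ (α - 1) *
        ∫ s in Ioo (0:ℝ) κ, (ψ κ - ψ s) ^ (-α) * u' s := by
    rw [← MeasureTheory.integral_indicator measurableSet_Ioo]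
    congr 1
    funext κ
    by_cases hκ : κ ∈ Ioo (0:ℝ) z
    · rw [indicator_of_mem hκ, hsec_mem κ hκ,
        MeasureTheory.integral_indicator measurableSet_Ioo,
        MeasureTheory.integral_const_mul]
    · rw [indicator_of_notMem hκ, hsec_zero κ hκ]
      simp
  -- identify the right side
  have hR : (∫ s, ∫ κ, fc κ s) =
      (Real.Gamma (1 - α) * Real.Gamma α) * ∫ s in Ioo (0:ℝ) z, u' s := by
    rw [← MeasureTheory.integral_const_mul,
      ← MeasureTheory.integral_indicator measurableSet_Ioo]
    congr 1
    funext s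
    by_cases hs : s ∈ Ioo (0:ℝ) z
    · rw [indicator_of_mem hs]
      have hksec : (fun κ => fc κ s) = (Ioo s z).indicator
          (fun κ => (ψ' κ * ((ψ z - ψ κ) ^ (α - 1) * (ψ κ - ψ s) ^ (-α))) * u' s) := by
        funext κ
        by_cases hκ : κ ∈ Ioo s z
        · rw [indicator_of_mem hκ]
          have hmem : (κ, s) ∈ T := ⟨hs.1, hκ.1, hκ.2⟩
          calc fc κ s = Pf (κ, s) := indicator_of_mem hmem Pf
            _ = ψ' κ * ((ψ z - ψ κ) ^ (α - 1) * (ψ κ - ψ s) ^ (-α)) * u' s := by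
                simp only [hPf]; ring
        · rw [indicator_of_notMem hκ]
          have hmem : (κ, s) ∉ T := fun hmem => hκ ⟨hmem.2.1, hmem.2.2⟩
          exact indicator_of_notMem hmem Pf
      have hib := aux_inner_beta hα0 hα1 hψ_mono hψ_deriv hψ'_pos hs.1.le hs.2 hzb
      rw [hksec, MeasureTheory.integral_indicator measurableSet_Ioo,
        MeasureTheory.integral_mul_const, hib.2]
    · rw [indicator_of_notMem hs]
      have hzero : (fun κ => fc κ s) = fun _ => 0 := by
        funext κ
        have hmem : (κ, s) ∉ T := by
          intro hmem
          exact hs ⟨hmem.1, (hmem.2.1.trans hmem.2.2)⟩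
        exact indicator_of_notMem hmem Pf
      rw [hzero]
      simp
  -- FTC for u
  have hFTCu : ∫ s in Ioo (0:ℝ) z, u' s = u z - u 0 := by
    rw [← MeasureTheory.integral_Ioc_eq_integral_Ioo,
      ← intervalIntegral.integral_of_le hz0]
    have hucont : ContinuousOn u (Icc 0 b) := fun x hx => (hu_deriv x hx).continuousWithinAt
    refine intervalIntegral.integral_eq_sub_of_hasDeriv_right_of_le hz0
      (hucont.mono (Icc_subset_Icc (le_refl 0) hzb))
      (fun x hx => ?_)
      (((hu'_cont.mono (Icc_subset_Icc (le_refl 0) hzb)).intervalIntegrable_of_Icc hz0))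
    have hmem : Icc (0:ℝ) b ∈ nhds x := Icc_mem_nhds hx.1 (hx.2.trans_le hzb)
    exact ((hu_deriv x ⟨hx.1.le, hx.2.le.trans hzb⟩).hasDerivAt hmem).hasDerivWithinAt
  -- now assemble
  have hcap : ∀ κ ∈ Ioo (0:ℝ) z, psiCaputo α ψ ψ' u' κ =
      (1 / Real.Gamma (1 - α)) * ∫ s in Ioo 0 κ, (ψ κ - ψ s) ^ (-α) * u' s :=
    fun κ hκ => aux_caputo_Ioo hψ'_pos hκ.1.le (hκ.2.le.trans hzb)
  rw [psiInt, intervalIntegral.integral_of_le hz0,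
    MeasureTheory.integral_Ioc_eq_integral_Ioo]
  have hstep : ∫ κ in Ioo (0:ℝ) z, ψ' κ * (ψ z - ψ κ) ^ (α - 1) * psiCaputo α ψ ψ' u' κ
      = (1 / Real.Gamma (1 - α)) * ∫ κ, ∫ s, fc κ s := by
    rw [hL, ← MeasureTheory.integral_const_mul]
    refine setIntegral_congr_fun measurableSet_Ioo (fun κ hκ => ?_)
    rw [hcap κ hκ]
    ring
  rw [hstep, hswap, hR, hFTCu]
  field_simp
lemma aux_caputo_bound (hα0 : 0 < α) (hα1 : α < 1)
    (hψ_mono : StrictMonoOn ψ (Set.Icc 0 b))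
    (hψ_deriv : ∀ x ∈ Set.Icc 0 b, HasDerivWithinAt ψ (ψ' x) (Set.Icc 0 b) x)
    (hψ'_cont : ContinuousOn ψ' (Set.Icc 0 b))
    (hψ'_pos : ∀ x ∈ Set.Icc 0 b, 0 < ψ' x)
    (hm0 : 0 < m) (hm : ∀ x ∈ Set.Icc 0 b, m ≤ ψ' x)
    {g : ℝ → ℝ} {Cg : ℝ}
    (hgmeas : ∀ z₀, 0 ≤ z₀ → z₀ ≤ b → AEStronglyMeasurable g (volume.restrict (Ioo 0 z₀)))
    (hCg : ∀ x ∈ Set.Icc 0 b, |g x| ≤ Cg)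
    {z : ℝ} (hz0 : 0 ≤ z) (hzb : z ≤ b) :
    |psiCaputo α ψ ψ' g z| ≤
      (1 / Real.Gamma (1 - α)) * (Cg * m ^ (-α) * (b ^ (1 - α) / (1 - α))) := by
  have hΓb : 0 < Real.Gamma (1 - α) := Real.Gamma_pos_of_pos (by linarith)
  have hexp : ((1:ℝ) - α - 1) = -α := by ring
  rw [aux_caputo_Ioo hψ'_pos hz0 hzb]
  rw [abs_mul, abs_of_nonneg (by positivity : (0:ℝ) ≤ 1 / Real.Gamma (1 - α))]
  refine mul_le_mul_of_nonneg_left ?_ (by positivity)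
  have hdb := aux_dom_bound (β := 1 - α) hψ_mono hψ_deriv hψ'_cont hm0 hm
    (by linarith) (by linarith) hz0 hzb (hgmeas z hz0 hzb)
    (C := Cg) (fun s hs => hCg s ⟨hs.1.le, hs.2.le.trans hzb⟩)
  rw [hexp] at hdb
  have h1 : |∫ s in Ioo (0:ℝ) z, (ψ z - ψ s) ^ (-α) * g s|
      ≤ ∫ s in Ioo (0:ℝ) z, |(ψ z - ψ s) ^ (-α) * g s| := by
    calc |∫ s in Ioo (0:ℝ) z, (ψ z - ψ s) ^ (-α) * g s|
        = ‖∫ s in Ioo (0:ℝ) z, (ψ z - ψ s) ^ (-α) * g s‖ := (Real.norm_eq_abs _).symm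
      _ ≤ ∫ s in Ioo (0:ℝ) z, ‖(ψ z - ψ s) ^ (-α) * g s‖ :=
          MeasureTheory.norm_integral_le_integral_norm _
      _ = ∫ s in Ioo (0:ℝ) z, |(ψ z - ψ s) ^ (-α) * g s| := by
          simp only [Real.norm_eq_abs]
  refine h1.trans (hdb.trans ?_)
  have hCg0 : 0 ≤ Cg := (abs_nonneg _).trans (hCg 0 ⟨le_refl 0, hz0.trans hzb⟩)
  have h2 : z ^ (1 - α) ≤ b ^ (1 - α) := Real.rpow_le_rpow hz0 hzb (by linarith)
  have h3 : z ^ (1 - α) / (1 - α) ≤ b ^ (1 - α) / (1 - α) :=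
    (div_le_div_iff_of_pos_right (by linarith)).mpr h2
  exact mul_le_mul_of_nonneg_left h3 (by positivity)

lemma aux_caputo_meas (hα0 : 0 < α) (hα1 : α < 1)
    (hψ_mono : StrictMonoOn ψ (Set.Icc 0 b))
    (hψ_deriv : ∀ x ∈ Set.Icc 0 b, HasDerivWithinAt ψ (ψ' x) (Set.Icc 0 b) x)
    (hψ'_cont : ContinuousOn ψ' (Set.Icc 0 b))
    (hψ'_pos : ∀ x ∈ Set.Icc 0 b, 0 < ψ' x)
    {g : ℝ → ℝ} (hg : ContinuousOn g (Set.Icc 0 b)) :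
    AEStronglyMeasurable (fun τ => psiCaputo α ψ ψ' g τ)
      (volume.restrict (Ioo 0 b)) := by
  have hψc : ContinuousOn ψ (Icc 0 b) := fun x hx => (hψ_deriv x hx).continuousWithinAt
  set T : Set (ℝ × ℝ) := {p | 0 < p.2 ∧ p.2 < p.1 ∧ p.1 < b} with hT
  set Pf : ℝ × ℝ → ℝ := fun p => ψ' p.2 * (ψ p.1 - ψ p.2) ^ (-α) * (g p.2 / ψ' p.2)
    with hPf
  have hTopen : IsOpen T := by
    have h1 : IsOpen {p : ℝ × ℝ | 0 < p.2} := isOpen_lt continuous_const continuous_snd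
    have h2 : IsOpen {p : ℝ × ℝ | p.2 < p.1} := isOpen_lt continuous_snd continuous_fst
    have h3 : IsOpen {p : ℝ × ℝ | p.1 < b} := isOpen_lt continuous_fst continuous_const
    have : T = {p : ℝ × ℝ | 0 < p.2} ∩ ({p : ℝ × ℝ | p.2 < p.1} ∩ {p : ℝ × ℝ | p.1 < b}) := by
      ext p; simp [hT, mem_setOf_eq, and_assoc]
    rw [this]; exact h1.inter (h2.inter h3)
  have hTIcc1 : ∀ p ∈ T, p.1 ∈ Icc (0:ℝ) b := fun p hp =>
    ⟨(hp.1.trans hp.2.1).le, hp.2.2.le⟩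
  have hTIcc2 : ∀ p ∈ T, p.2 ∈ Icc (0:ℝ) b := fun p hp =>
    ⟨hp.1.le, (hp.2.1.trans hp.2.2).le⟩
  have hPfcont : ContinuousOn Pf T := by
    have hc1 : ContinuousOn (fun p : ℝ × ℝ => ψ' p.2) T :=
      hψ'_cont.comp continuous_snd.continuousOn hTIcc2
    have hcψ1 : ContinuousOn (fun p : ℝ × ℝ => ψ p.1) T :=
      hψc.comp continuous_fst.continuousOn hTIcc1
    have hcψ2 : ContinuousOn (fun p : ℝ × ℝ => ψ p.2) T :=
      hψc.comp continuous_snd.continuousOn hTIcc2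
    have hcg : ContinuousOn (fun p : ℝ × ℝ => g p.2) T :=
      hg.comp continuous_snd.continuousOn hTIcc2
    have hk : ContinuousOn (fun p : ℝ × ℝ => (ψ p.1 - ψ p.2) ^ (-α)) T := by
      refine ContinuousOn.rpow_const (hcψ1.sub hcψ2) (fun p hp => Or.inl ?_)
      exact (sub_pos.2 (hψ_mono (hTIcc2 p hp) (hTIcc1 p hp) hp.2.1)).ne'
    exact (hc1.mul hk).mul (hcg.div hc1 (fun p hp => (hψ'_pos _ (hTIcc2 p hp)).ne'))
  have hSM : StronglyMeasurable (T.indicator Pf) :=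
    (aux_indicator_meas hTopen hPfcont).stronglyMeasurable
  have hSM2 : StronglyMeasurable (fun τ => (1 / Real.Gamma (1 - α)) *
      ∫ s, T.indicator Pf (τ, s)) :=
    (hSM.integral_prod_right').const_mul _
  refine hSM2.aestronglyMeasurable.congr ?_
  rw [Filter.eventuallyEq_iff_exists_mem]
  refine ⟨Ioo 0 b, ?_, fun τ hτ => ?_⟩
  · rw [MeasureTheory.mem_ae_iff]
    simp [MeasureTheory.Measure.restrict_apply, measurableSet_Ioo]
  · have hsec : (fun s => T.indicator Pf (τ, s)) = (Ioo (0:ℝ) τ).indicator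
        (fun s => ψ' s * (ψ τ - ψ s) ^ (-α) * (g s / ψ' s)) := by
      funext s
      by_cases hs : s ∈ Ioo (0:ℝ) τ
      · rw [indicator_of_mem hs]
        have hmemT : (τ, s) ∈ T := ⟨hs.1, hs.2, hτ.2⟩
        exact indicator_of_mem hmemT Pf
      · rw [indicator_of_notMem hs]
        have hmemT : (τ, s) ∉ T := fun hmem => hs ⟨hmem.1, hmem.2.1⟩
        exact indicator_of_notMem hmemT Pf
    show (1 / Real.Gamma (1 - α)) * (∫ s, T.indicator Pf (τ, s)) = psiCaputo α ψ ψ' g τ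
    rw [hsec, MeasureTheory.integral_indicator measurableSet_Ioo]
    rw [psiCaputo, intervalIntegral.integral_of_le hτ.1.le,
      MeasureTheory.integral_Ioc_eq_integral_Ioo]

lemma aux_exp_bound (hα0 : 0 < α) (hα1 : α < 1)
    (hψ_mono : StrictMonoOn ψ (Set.Icc 0 b))
    (hψ_deriv : ∀ x ∈ Set.Icc 0 b, HasDerivWithinAt ψ (ψ' x) (Set.Icc 0 b) x)
    (hψ'_pos : ∀ x ∈ Set.Icc 0 b, 0 < ψ' x)
    {lam : ℝ} (hlam : 0 < lam) {z : ℝ} (hz0 : 0 ≤ z) (hzb : z ≤ b) :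
    psiInt α ψ ψ' (fun κ => Real.exp (lam * ψ κ)) z ≤
      lam ^ (-α) * Real.exp (lam * ψ z) := by
  have hΓa : 0 < Real.Gamma α := Real.Gamma_pos_of_pos hα0
  rcases eq_or_lt_of_le hz0 with rfl | hzpos
  · rw [psiInt]
    simp only [intervalIntegral.integral_same, mul_zero]
    positivity
  have hψc : ContinuousOn ψ (Icc 0 b) := fun x hx => (hψ_deriv x hx).continuousWithinAt
  have hzsub : Ioo (0:ℝ) z ⊆ Icc 0 b := fun x hx => ⟨hx.1.le, hx.2.le.trans hzb⟩
  set A := ψ 0 with hA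
  set C := ψ z with hC
  have hAC : A < C := hψ_mono ⟨le_refl 0, hz0.trans hzb⟩ ⟨hz0, hzb⟩ hzpos
  set g : ℝ → ℝ := fun x => (C - x) ^ (α - 1) * Real.exp (lam * x) with hg
  -- step 1 : remove ψ
  have hder : ∀ x ∈ Ioo (0:ℝ) z, HasDerivWithinAt ψ (ψ' x) (Ioo 0 z) x :=
    fun x hx => (hψ_deriv x (hzsub hx)).mono hzsub
  have hinj : InjOn ψ (Ioo 0 z) := (hψ_mono.injOn).mono hzsub
  have himg : ψ '' (Ioo 0 z) = Ioo A C :=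
    aux_image_Ioo hz0 (hψ_mono.mono (Icc_subset_Icc (le_refl 0) hzb))
      (hψc.mono (Icc_subset_Icc (le_refl 0) hzb))
  have key := integral_image_eq_integral_abs_deriv_smul measurableSet_Ioo hder hinj g
  rw [himg] at key
  -- step 2 : reflect
  set D := C - A with hD
  have hD0 : 0 < D := sub_pos.2 hAC
  have hder2 : ∀ t ∈ Ioo (0:ℝ) D, HasDerivWithinAt (fun t => C - t) (-1) (Ioo 0 D) t :=
    fun t ht => ((hasDerivAt_id t).const_sub C).hasDerivWithinAt
  have hinj2 : InjOn (fun t : ℝ => C - t) (Ioo 0 D) := fun x _ y _ h => by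
    simpa using h
  have himg2 : (fun t : ℝ => C - t) '' (Ioo 0 D) = Ioo A C := by
    rw [Set.image_const_sub_Ioo]
    congr 1 <;> simp [hD]
  have key2 := integral_image_eq_integral_abs_deriv_smul measurableSet_Ioo hder2 hinj2 g
  rw [himg2] at key2
  -- upper bound of the reflected integral
  have hintIoi : IntegrableOn (fun t : ℝ => t ^ (α - 1) * Real.exp (-(lam * t)))
      (Ioi (0:ℝ)) := by
    have := integrableOn_rpow_mul_exp_neg_mul_rpow (p := 1) (s := α - 1) (b := lam)
      (by linarith) (by norm_num) hlam
    refine this.congr_fun (fun t ht => ?_) measurableSet_Ioi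
    simp only [Real.rpow_one]
    ring_nf
  have hmono_set : ∫ t in Ioo (0:ℝ) D, t ^ (α - 1) * Real.exp (-(lam * t)) ≤
      ∫ t in Ioi (0:ℝ), t ^ (α - 1) * Real.exp (-(lam * t)) := by
    refine setIntegral_mono_set hintIoi ?_ (HasSubset.Subset.eventuallyLE Ioo_subset_Ioi_self)
    refine (MeasureTheory.ae_restrict_iff' measurableSet_Ioi).2 (ae_of_all _ (fun t ht => ?_))
    have : (0:ℝ) ≤ t ^ (α - 1) := Real.rpow_nonneg (le_of_lt ht) _
    positivity
  have hIoi_val : ∫ t in Ioi (0:ℝ), t ^ (α - 1) * Real.exp (-(lam * t)) =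
      (1 / lam) ^ α * Real.Gamma α := Real.integral_rpow_mul_exp_neg_mul_Ioi hα0 hlam
  -- put everything together
  have hval : ∫ κ in Ioo (0:ℝ) z, ψ' κ * (ψ z - ψ κ) ^ (α - 1) * Real.exp (lam * ψ κ)
      = ∫ t in Ioo (0:ℝ) D, Real.exp (lam * C) * (t ^ (α - 1) * Real.exp (-(lam * t))) := by
    have e1 : ∫ κ in Ioo (0:ℝ) z, ψ' κ * (ψ z - ψ κ) ^ (α - 1) * Real.exp (lam * ψ κ)
        = ∫ κ in Ioo (0:ℝ) z, |ψ' κ| • g (ψ κ) := by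
      refine setIntegral_congr_fun measurableSet_Ioo (fun κ hκ => ?_)
      rw [smul_eq_mul, hg, abs_of_pos (hψ'_pos κ (hzsub hκ))]
      ring
    have e2 : ∫ t in Ioo (0:ℝ) D, |(-1:ℝ)| • g (C - t)
        = ∫ t in Ioo (0:ℝ) D, Real.exp (lam * C) * (t ^ (α - 1) * Real.exp (-(lam * t))) := by
      refine setIntegral_congr_fun measurableSet_Ioo (fun t ht => ?_)
      rw [smul_eq_mul, hg]
      simp only [abs_neg, abs_one, one_mul, sub_sub_cancel]
      rw [show lam * (C - t) = lam * C + -(lam * t) by ring, Real.exp_add]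
      ring
    rw [e1, ← key, key2, e2]
  rw [psiInt, intervalIntegral.integral_of_le hz0,
    MeasureTheory.integral_Ioc_eq_integral_Ioo, hval,
    MeasureTheory.integral_const_mul]
  calc (1 / Real.Gamma α) * (Real.exp (lam * C) *
        ∫ t in Ioo (0:ℝ) D, t ^ (α - 1) * Real.exp (-(lam * t)))
      ≤ (1 / Real.Gamma α) * (Real.exp (lam * C) * ((1 / lam) ^ α * Real.Gamma α)) := by
        refine mul_le_mul_of_nonneg_left (mul_le_mul_of_nonneg_left ?_ (Real.exp_nonneg _))
          (by positivity)
        rw [← hIoi_val]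
        exact hmono_set
    _ = lam ^ (-α) * Real.exp (lam * ψ z) := by
        rw [show ((1:ℝ)/lam) ^ α = lam ^ (-α) by
          rw [one_div, Real.inv_rpow hlam.le, ← Real.rpow_neg hlam.le]]
        rw [hC]
        field_simp
lemma aux_psiInt_Ioo {f : ℝ → ℝ} {z : ℝ} (hz0 : 0 ≤ z) :
    psiInt α ψ ψ' f z =
      (1 / Real.Gamma α) * ∫ κ in Ioo 0 z, ψ' κ * (ψ z - ψ κ) ^ (α - 1) * f κ := by
  rw [psiInt, intervalIntegral.integral_of_le hz0, MeasureTheory.integral_Ioc_eq_integral_Ioo]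

lemma aux_kernel_nonneg (hψ_mono : StrictMonoOn ψ (Set.Icc 0 b))
    (hψ'_pos : ∀ x ∈ Set.Icc 0 b, 0 < ψ' x)
    {z : ℝ} (hz0 : 0 ≤ z) (hzb : z ≤ b) {κ : ℝ} (hκ : κ ∈ Ioo (0:ℝ) z) :
    0 ≤ ψ' κ * (ψ z - ψ κ) ^ (α - 1) := by
  have h1 := (hψ'_pos κ ⟨hκ.1.le, hκ.2.le.trans hzb⟩).le
  have h2 : (0:ℝ) ≤ (ψ z - ψ κ) ^ (α - 1) := Real.rpow_nonneg
    (sub_nonneg.2 ((hψ_mono.monotoneOn) ⟨hκ.1.le, hκ.2.le.trans hzb⟩ ⟨hz0, hzb⟩ hκ.2.le)) _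
  positivity

lemma aux_psiInt_integrable (hα0 : 0 < α) (hα1 : α < 1)
    (hψ_mono : StrictMonoOn ψ (Set.Icc 0 b))
    (hψ_deriv : ∀ x ∈ Set.Icc 0 b, HasDerivWithinAt ψ (ψ' x) (Set.Icc 0 b) x)
    (hψ'_cont : ContinuousOn ψ' (Set.Icc 0 b))
    (hm0 : 0 < m) (hm : ∀ x ∈ Set.Icc 0 b, m ≤ ψ' x)
    {z : ℝ} (hz0 : 0 ≤ z) (hzb : z ≤ b)
    {f : ℝ → ℝ} (hf : AEStronglyMeasurable f (volume.restrict (Ioo 0 z)))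
    {C : ℝ} (hC : ∀ κ ∈ Ioo (0:ℝ) z, |f κ| ≤ C) :
    IntegrableOn (fun κ => ψ' κ * (ψ z - ψ κ) ^ (α - 1) * f κ) (Ioo 0 z) := by
  rcases eq_or_lt_of_le hz0 with rfl | hzpos
  · rw [Set.Ioo_self]
    exact integrableOn_empty
  obtain ⟨Mψ, hMψ⟩ := isCompact_Icc.exists_bound_of_continuousOn hψ'_cont
  have hzsub : Ioo (0:ℝ) z ⊆ Icc 0 b := fun x hx => ⟨hx.1.le, hx.2.le.trans hzb⟩
  have hMψ0 : 0 ≤ Mψ := (norm_nonneg _).trans (hMψ 0 ⟨le_refl 0, hzpos.le.trans hzb⟩)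
  have hC0 : 0 ≤ C := (abs_nonneg _).trans (hC (z/2) ⟨by linarith, by linarith⟩)
  have hmeas : AEStronglyMeasurable (fun κ => ψ' κ * f κ) (volume.restrict (Ioo 0 z)) :=
    ((hψ'_cont.mono hzsub).aestronglyMeasurable measurableSet_Ioo).mul hf
  have hbound : ∀ κ ∈ Ioo (0:ℝ) z, |ψ' κ * f κ| ≤ Mψ * C := by
    intro κ hκ
    rw [abs_mul]
    refine mul_le_mul ?_ (hC κ hκ) (abs_nonneg _) hMψ0
    simpa [Real.norm_eq_abs] using hMψ κ (hzsub hκ)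
  have := aux_dom_int (β := α) hψ_mono hψ_deriv hψ'_cont hm0 hm hα0 hα1.le hz0 hzb
    hmeas hbound
  refine this.congr_fun (fun κ hκ => ?_) measurableSet_Ioo
  ring

lemma aux_psiInt_mono (hα0 : 0 < α)
    (hψ_mono : StrictMonoOn ψ (Set.Icc 0 b))
    (hψ'_pos : ∀ x ∈ Set.Icc 0 b, 0 < ψ' x)
    {z : ℝ} (hz0 : 0 ≤ z) (hzb : z ≤ b) {f g : ℝ → ℝ}
    (hIf : IntegrableOn (fun κ => ψ' κ * (ψ z - ψ κ) ^ (α - 1) * f κ) (Ioo 0 z))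
    (hIg : IntegrableOn (fun κ => ψ' κ * (ψ z - ψ κ) ^ (α - 1) * g κ) (Ioo 0 z))
    (hfg : ∀ κ ∈ Ioo (0:ℝ) z, f κ ≤ g κ) :
    psiInt α ψ ψ' f z ≤ psiInt α ψ ψ' g z := by
  have hΓa : 0 < Real.Gamma α := Real.Gamma_pos_of_pos hα0
  rw [aux_psiInt_Ioo hz0, aux_psiInt_Ioo hz0]
  refine mul_le_mul_of_nonneg_left ?_ (by positivity)
  refine setIntegral_mono_on hIf hIg measurableSet_Ioo (fun κ hκ => ?_)
  exact mul_le_mul_of_nonneg_left (hfg κ hκ)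
    (aux_kernel_nonneg hψ_mono hψ'_pos hz0 hzb hκ)

lemma aux_psiInt_nonneg (hα0 : 0 < α)
    (hψ_mono : StrictMonoOn ψ (Set.Icc 0 b))
    (hψ'_pos : ∀ x ∈ Set.Icc 0 b, 0 < ψ' x)
    {z : ℝ} (hz0 : 0 ≤ z) (hzb : z ≤ b) {f : ℝ → ℝ}
    (hf : ∀ κ ∈ Ioo (0:ℝ) z, 0 ≤ f κ) :
    0 ≤ psiInt α ψ ψ' f z := by
  have hΓa : 0 < Real.Gamma α := Real.Gamma_pos_of_pos hα0
  rw [aux_psiInt_Ioo hz0]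
  refine mul_nonneg (by positivity) (setIntegral_nonneg measurableSet_Ioo (fun κ hκ => ?_))
  exact mul_nonneg (aux_kernel_nonneg hψ_mono hψ'_pos hz0 hzb hκ) (hf κ hκ)

lemma aux_psiInt_abs (hα0 : 0 < α)
    (hψ_mono : StrictMonoOn ψ (Set.Icc 0 b))
    (hψ'_pos : ∀ x ∈ Set.Icc 0 b, 0 < ψ' x)
    {z : ℝ} (hz0 : 0 ≤ z) (hzb : z ≤ b) (f : ℝ → ℝ) :
    |psiInt α ψ ψ' f z| ≤ psiInt α ψ ψ' (fun κ => |f κ|) z := by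
  have hΓa : 0 < Real.Gamma α := Real.Gamma_pos_of_pos hα0
  rw [aux_psiInt_Ioo hz0, aux_psiInt_Ioo hz0, abs_mul,
    abs_of_nonneg (by positivity : (0:ℝ) ≤ 1 / Real.Gamma α)]
  refine mul_le_mul_of_nonneg_left ?_ (by positivity)
  calc |∫ κ in Ioo (0:ℝ) z, ψ' κ * (ψ z - ψ κ) ^ (α - 1) * f κ|
      = ‖∫ κ in Ioo (0:ℝ) z, ψ' κ * (ψ z - ψ κ) ^ (α - 1) * f κ‖ := (Real.norm_eq_abs _).symm
    _ ≤ ∫ κ in Ioo (0:ℝ) z, ‖ψ' κ * (ψ z - ψ κ) ^ (α - 1) * f κ‖ :=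
        MeasureTheory.norm_integral_le_integral_norm _
    _ = ∫ κ in Ioo (0:ℝ) z, ψ' κ * (ψ z - ψ κ) ^ (α - 1) * |f κ| := by
        refine setIntegral_congr_fun measurableSet_Ioo (fun κ hκ => ?_)
        rw [Real.norm_eq_abs, abs_mul,
          abs_of_nonneg (aux_kernel_nonneg hψ_mono hψ'_pos hz0 hzb hκ)]
lemma aux_H_meas {b : ℝ} {H : ℝ → ℝ → ℝ → ℝ}
    (hH_cont : ContinuousOn (fun p : ℝ × ℝ × ℝ => H p.1 p.2.1 p.2.2)
      (Set.Icc 0 b ×ˢ Set.Icc 0 b ×ˢ (Set.univ : Set ℝ)))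
    {z : ℝ} (hz0 : 0 ≤ z) (hzb : z ≤ b)
    {φ : ℝ → ℝ} (hφ : AEStronglyMeasurable φ (volume.restrict (Ioo 0 z))) :
    AEStronglyMeasurable (fun τ => H z τ (φ τ)) (volume.restrict (Ioo 0 z)) := by
  obtain ⟨mk, hmkSM, hmkae⟩ := hφ
  set S' : Set (ℝ × ℝ) := (Ioo (0:ℝ) b) ×ˢ (univ : Set ℝ) with hS'
  have hopen : IsOpen S' := isOpen_Ioo.prod isOpen_univ
  have hcont : ContinuousOn (fun q : ℝ × ℝ => H z q.1 q.2) S' := by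
    have hmap : Continuous (fun q : ℝ × ℝ => ((z, q.1, q.2) : ℝ × ℝ × ℝ)) :=
      continuous_const.prodMk (continuous_fst.prodMk continuous_snd)
    exact hH_cont.comp hmap.continuousOn
      (fun q hq => ⟨⟨hz0, hzb⟩, ⟨⟨hq.1.1.le, hq.1.2.le⟩, mem_univ _⟩⟩)
  have hind : Measurable (S'.indicator (fun q : ℝ × ℝ => H z q.1 q.2)) :=
    aux_indicator_meas hopen hcont
  have hcomp : Measurable (fun τ => S'.indicator (fun q : ℝ × ℝ => H z q.1 q.2) (τ, mk τ)) :=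
    hind.comp (measurable_id.prodMk hmkSM.measurable)
  refine hcomp.stronglyMeasurable.aestronglyMeasurable.congr ?_
  filter_upwards [hmkae, MeasureTheory.ae_restrict_mem measurableSet_Ioo] with τ h1 h2
  have hmem : (τ, mk τ) ∈ S' := ⟨⟨h2.1, h2.2.trans_le hzb⟩, mem_univ _⟩
  rw [indicator_of_mem hmem, ← h1]


set_option maxHeartbeats 2000000 in
/-- Generalized Ulam–Hyers–Rassias stability: under (Q1), (Q2), (Q3) and
`W₁(1+W₂)γ < 1`, a `ρ`-approximate solution `ω` and an exact solution `ϑ` with the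
same initial value satisfy `|ω(z) - ϑ(z)| ≤ B ρ(z)` with `B = γ / (1 - W₁(1+W₂)γ)`. -/
theorem caputo_generalized_ulam_hyers_rassias_stability (α b : ℝ) (hα0 : 0 < α) (hα1 : α < 1)
    (hb : 0 < b)
    (ψ ψ' : ℝ → ℝ)
    (hψ_mono : StrictMonoOn ψ (Set.Icc 0 b))
    (hψ_deriv : ∀ z ∈ Set.Icc 0 b, HasDerivWithinAt ψ (ψ' z) (Set.Icc 0 b) z)
    (hψ'_cont : ContinuousOn ψ' (Set.Icc 0 b))
    (hψ'_pos : ∀ z ∈ Set.Icc 0 b, 0 < ψ' z)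
    (F : ℝ → ℝ → ℝ → ℝ) (H : ℝ → ℝ → ℝ → ℝ)
    (hF_cont : ContinuousOn (fun p : ℝ × ℝ × ℝ => F p.1 p.2.1 p.2.2)
      (Set.Icc 0 b ×ˢ (Set.univ : Set ℝ) ×ˢ (Set.univ : Set ℝ)))
    (hH_cont : ContinuousOn (fun p : ℝ × ℝ × ℝ => H p.1 p.2.1 p.2.2)
      (Set.Icc 0 b ×ˢ Set.Icc 0 b ×ˢ (Set.univ : Set ℝ)))
    (n k : ℝ → ℝ)
    (hn_cont : ContinuousOn n (Set.Icc 0 b))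
    (hk_cont : ContinuousOn k (Set.Icc 0 b))
    (hQ1 : ∀ z ∈ Set.Icc 0 b, ∀ u₁ u₂ w₁ w₂ : ℝ,
      |F z u₁ u₂ - F z w₁ w₂| ≤ n z * (|u₁ - w₁| + |u₂ - w₂|))
    (hQ2 : ∀ z ∈ Set.Icc 0 b, ∀ τ ∈ Set.Icc 0 b, ∀ u w : ℝ,
      |H z τ u - H z τ w| ≤ k z * |u - w|)
    (W₁ W₂ : ℝ)
    (hW₁ : W₁ = sSup ((fun z => |n z|) '' Set.Icc 0 b))
    (hW₂ : W₂ = sSup ((fun z => |k z|) '' Set.Icc 0 b))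
    (ρ : ℝ → ℝ)
    (hρ_cont : ContinuousOn ρ (Set.Icc 0 b))
    (hρ_mono : StrictMonoOn ρ (Set.Icc 0 b))
    (hρ_nonneg : ∀ z ∈ Set.Icc 0 b, 0 ≤ ρ z)
    (γ : ℝ) (hγ : 0 < γ)
    (hQ3 : ∀ z ∈ Set.Icc 0 b, psiInt α ψ ψ' ρ z ≤ γ * ρ z)
    (hsmall : W₁ * (1 + W₂) * γ < 1)
    (ω ω' : ℝ → ℝ)
    (hω_deriv : ∀ z ∈ Set.Icc 0 b, HasDerivWithinAt ω (ω' z) (Set.Icc 0 b) z)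
    (hω'_cont : ContinuousOn ω' (Set.Icc 0 b))
    (hω_approx : ∀ z ∈ Set.Icc 0 b,
      |psiCaputo α ψ ψ' ω' z -
        F z (ω z) (psiInt α ψ ψ' (fun τ => H z τ (psiCaputo α ψ ψ' ω' τ)) z)| ≤ ρ z)
    (v v' : ℝ → ℝ)
    (hv_deriv : ∀ z ∈ Set.Icc 0 b, HasDerivWithinAt v (v' z) (Set.Icc 0 b) z)
    (hv'_cont : ContinuousOn v' (Set.Icc 0 b))
    (hv_sol : ∀ z ∈ Set.Icc 0 b,
      psiCaputo α ψ ψ' v' z =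
        F z (v z) (psiInt α ψ ψ' (fun τ => H z τ (psiCaputo α ψ ψ' v' τ)) z))
    (hv0 : v 0 = ω 0) :
    ∀ z ∈ Set.Icc 0 b,
      |ω z - v z| ≤ γ / (1 - W₁ * (1 + W₂) * γ) * ρ z := by
  have h0b : (0:ℝ) ∈ Icc (0:ℝ) b := ⟨le_refl 0, hb.le⟩
  have hbb : b ∈ Icc (0:ℝ) b := ⟨hb.le, le_refl b⟩
  have hψc : ContinuousOn ψ (Icc 0 b) := fun x hx => (hψ_deriv x hx).continuousWithinAt
  have hΓa : 0 < Real.Gamma α := Real.Gamma_pos_of_pos hα0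
  have hΓb : 0 < Real.Gamma (1 - α) := Real.Gamma_pos_of_pos (by linarith)
  -- the minimum of ψ'
  obtain ⟨xm, hxm, hxmin⟩ := isCompact_Icc.exists_isMinOn ⟨0, h0b⟩ hψ'_cont
  set m : ℝ := ψ' xm with hmdef
  have hm0 : 0 < m := hψ'_pos xm hxm
  have hm : ∀ x ∈ Icc (0:ℝ) b, m ≤ ψ' x := fun x hx => hxmin hx
  -- sSup facts
  have hn_bdd : BddAbove ((fun z => |n z|) '' Icc 0 b) :=
    (isCompact_Icc.image_of_continuousOn hn_cont.abs).bddAbove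
  have hk_bdd : BddAbove ((fun z => |k z|) '' Icc 0 b) :=
    (isCompact_Icc.image_of_continuousOn hk_cont.abs).bddAbove
  have hW₁_ge : ∀ x ∈ Icc (0:ℝ) b, |n x| ≤ W₁ := fun x hx =>
    hW₁ ▸ le_csSup hn_bdd ⟨x, hx, rfl⟩
  have hW₂_ge : ∀ x ∈ Icc (0:ℝ) b, |k x| ≤ W₂ := fun x hx =>
    hW₂ ▸ le_csSup hk_bdd ⟨x, hx, rfl⟩
  have hW₁0 : 0 ≤ W₁ := (abs_nonneg _).trans (hW₁_ge 0 h0b)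
  have hW₂0 : 0 ≤ W₂ := (abs_nonneg _).trans (hW₂_ge 0 h0b)
  set c : ℝ := W₁ * (1 + W₂) with hcdef
  have hc0 : 0 ≤ c := by positivity
  have hcγ : c * γ < 1 := hsmall
  have hθpos : 0 < 1 - c * γ := by linarith
  set θ : ℝ := (1 - c * γ)⁻¹ with hθdef
  have hθ0 : 0 < θ := inv_pos.2 hθpos
  -- Caputo derivatives
  set e : ℝ → ℝ := fun τ => psiCaputo α ψ ψ' ω' τ - psiCaputo α ψ ψ' v' τ with hedef
  obtain ⟨Cω, hCω⟩ := isCompact_Icc.exists_bound_of_continuousOn hω'_cont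
  obtain ⟨Cv, hCv⟩ := isCompact_Icc.exists_bound_of_continuousOn hv'_cont
  have hCω0 : 0 ≤ Cω := (norm_nonneg _).trans (hCω 0 h0b)
  have hCv0 : 0 ≤ Cv := (norm_nonneg _).trans (hCv 0 h0b)
  set Kω : ℝ := (1 / Real.Gamma (1 - α)) * (Cω * m ^ (-α) * (b ^ (1 - α) / (1 - α))) with hKω
  set Kv : ℝ := (1 / Real.Gamma (1 - α)) * (Cv * m ^ (-α) * (b ^ (1 - α) / (1 - α))) with hKv
  have hbK : ∀ (g : ℝ → ℝ), ContinuousOn g (Icc 0 b) → ∀ (Cg : ℝ),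
      (∀ x ∈ Icc (0:ℝ) b, |g x| ≤ Cg) → ∀ τ ∈ Icc (0:ℝ) b,
      |psiCaputo α ψ ψ' g τ| ≤
        (1 / Real.Gamma (1 - α)) * (Cg * m ^ (-α) * (b ^ (1 - α) / (1 - α))) := by
    intro g hg Cg hCg τ hτ
    refine aux_caputo_bound hα0 hα1 hψ_mono hψ_deriv hψ'_cont hψ'_pos hm0 hm
      (fun z₀ h1 h2 => (hg.mono (fun x hx => ⟨hx.1.le, hx.2.le.trans h2⟩)).aestronglyMeasurable
        measurableSet_Ioo) hCg hτ.1 hτ.2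
  have hKωb : ∀ τ ∈ Icc (0:ℝ) b, |psiCaputo α ψ ψ' ω' τ| ≤ Kω :=
    hbK ω' hω'_cont Cω (fun x hx => by rw [← Real.norm_eq_abs]; exact hCω x hx)
  have hKvb : ∀ τ ∈ Icc (0:ℝ) b, |psiCaputo α ψ ψ' v' τ| ≤ Kv :=
    hbK v' hv'_cont Cv (fun x hx => by rw [← Real.norm_eq_abs]; exact hCv x hx)
  set K : ℝ := Kω + Kv with hKdef
  have hKe : ∀ τ ∈ Icc (0:ℝ) b, |e τ| ≤ K := fun τ hτ =>
    (abs_sub _ _).trans (add_le_add (hKωb τ hτ) (hKvb τ hτ))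
  have hK0 : 0 ≤ K := (abs_nonneg _).trans (hKe 0 h0b)
  -- measurability of e
  have hemeas_b : AEStronglyMeasurable e (volume.restrict (Ioo 0 b)) :=
    (aux_caputo_meas hα0 hα1 hψ_mono hψ_deriv hψ'_cont hψ'_pos hω'_cont).sub
      (aux_caputo_meas hα0 hα1 hψ_mono hψ_deriv hψ'_cont hψ'_pos hv'_cont)
  have hemeas : ∀ z ∈ Icc (0:ℝ) b, AEStronglyMeasurable e (volume.restrict (Ioo 0 z)) :=
    fun z hz => hemeas_b.mono_measure
      (Measure.restrict_mono (Ioo_subset_Ioo_right hz.2) (le_refl _))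
  -- E
  set E : ℝ → ℝ := fun z => psiInt α ψ ψ' (fun τ => |e τ|) z with hEdef
  have hIe : ∀ z ∈ Icc (0:ℝ) b, IntegrableOn
      (fun κ => ψ' κ * (ψ z - ψ κ) ^ (α - 1) * |e κ|) (Ioo 0 z) := fun z hz =>
    aux_psiInt_integrable hα0 hα1 hψ_mono hψ_deriv hψ'_cont hm0 hm hz.1 hz.2
      ((hemeas z hz).norm.congr (by
        filter_upwards with κ using (Real.norm_eq_abs _)))
      (C := K) (fun κ hκ => by
        rw [abs_abs]; exact hKe κ ⟨hκ.1.le, hκ.2.le.trans hz.2⟩)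
  have hE0 : ∀ z ∈ Icc (0:ℝ) b, 0 ≤ E z := fun z hz =>
    aux_psiInt_nonneg hα0 hψ_mono hψ'_pos hz.1 hz.2 (fun κ _ => abs_nonneg _)
  -- linearity of Caputo and the representation of ω - v
  have hlin : ∀ τ ∈ Icc (0:ℝ) b,
      psiCaputo α ψ ψ' (fun x => ω' x - v' x) τ = e τ := by
    intro τ hτ
    have hIω := aux_dom_int (β := 1 - α) hψ_mono hψ_deriv hψ'_cont hm0 hm
      (by linarith) (by linarith) hτ.1 hτ.2
      ((hω'_cont.mono (fun x hx => ⟨hx.1.le, hx.2.le.trans hτ.2⟩)).aestronglyMeasurable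
        measurableSet_Ioo)
      (C := Cω) (fun s hs => by
        rw [← Real.norm_eq_abs]; exact hCω s ⟨hs.1.le, hs.2.le.trans hτ.2⟩)
    have hIv := aux_dom_int (β := 1 - α) hψ_mono hψ_deriv hψ'_cont hm0 hm
      (by linarith) (by linarith) hτ.1 hτ.2
      ((hv'_cont.mono (fun x hx => ⟨hx.1.le, hx.2.le.trans hτ.2⟩)).aestronglyMeasurable
        measurableSet_Ioo)
      (C := Cv) (fun s hs => by
        rw [← Real.norm_eq_abs]; exact hCv s ⟨hs.1.le, hs.2.le.trans hτ.2⟩)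
    have hexp : ((1:ℝ) - α - 1) = -α := by ring
    rw [hexp] at hIω hIv
    rw [hedef]
    simp only []
    rw [aux_caputo_Ioo hψ'_pos hτ.1 hτ.2, aux_caputo_Ioo hψ'_pos hτ.1 hτ.2,
      aux_caputo_Ioo hψ'_pos hτ.1 hτ.2]
    rw [← mul_sub]
    congr 1
    rw [← MeasureTheory.integral_sub hIω hIv]
    refine setIntegral_congr_fun measurableSet_Ioo (fun s hs => ?_)
    ring
  have hrep : ∀ z ∈ Icc (0:ℝ) b, ω z - v z = psiInt α ψ ψ' e z := by
    intro z hz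
    have hftc := aux_ftc hα0 hα1 hψ_mono hψ_deriv hψ'_cont hψ'_pos hm0 hm
      (u := fun x => ω x - v x) (u' := fun x => ω' x - v' x)
      (fun x hx => (hω_deriv x hx).sub (hv_deriv x hx))
      (hω'_cont.sub hv'_cont) hz.1 hz.2
    have hcongr : psiInt α ψ ψ' (fun τ => psiCaputo α ψ ψ' (fun x => ω' x - v' x) τ) z
        = psiInt α ψ ψ' e z := by
      rw [psiInt, psiInt]
      congr 1
      refine intervalIntegral.integral_congr (fun κ hκ => ?_)
      rw [uIcc_of_le hz.1] at hκ
      rw [hlin κ ⟨hκ.1, hκ.2.trans hz.2⟩]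
    rw [← hcongr, hftc]
    show ω z - v z = (ω z - v z) - (ω 0 - v 0)
    rw [hv0]
    ring
  have habs_uE : ∀ z ∈ Icc (0:ℝ) b, |ω z - v z| ≤ E z := by
    intro z hz
    rw [hrep z hz]
    exact aux_psiInt_abs hα0 hψ_mono hψ'_pos hz.1 hz.2 e
  -- the pointwise key estimate
  obtain ⟨CH0, hCH0⟩ := (isCompact_Icc.prod isCompact_Icc).exists_bound_of_continuousOn
    (show ContinuousOn (fun q : ℝ × ℝ => H q.1 q.2 0) (Icc (0:ℝ) b ×ˢ Icc (0:ℝ) b) from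
      hH_cont.comp
        (continuous_fst.prodMk (continuous_snd.prodMk continuous_const)).continuousOn
        (fun q hq => ⟨hq.1, hq.2, mem_univ _⟩))
  have hHb : ∀ z ∈ Icc (0:ℝ) b, ∀ (φ : ℝ → ℝ) (Kφ : ℝ),
      (∀ τ ∈ Icc (0:ℝ) b, |φ τ| ≤ Kφ) → ∀ τ ∈ Icc (0:ℝ) b,
      |H z τ (φ τ)| ≤ CH0 + W₂ * Kφ := by
    intro z hz φ Kφ hKφ τ hτ
    have h1 : |H z τ 0| ≤ CH0 := by
      rw [← Real.norm_eq_abs]; exact hCH0 (z, τ) ⟨hz, hτ⟩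
    have h2 : |H z τ (φ τ) - H z τ 0| ≤ k z * |φ τ - 0| := hQ2 z hz τ hτ (φ τ) 0
    have h3 : k z * |φ τ - 0| ≤ W₂ * Kφ := by
      rw [sub_zero]
      calc k z * |φ τ| ≤ |k z| * |φ τ| :=
            mul_le_mul_of_nonneg_right (le_abs_self _) (abs_nonneg _)
        _ ≤ W₂ * Kφ := mul_le_mul (hW₂_ge z hz) (hKφ τ hτ) (abs_nonneg _) hW₂0
    calc |H z τ (φ τ)| = |H z τ 0 + (H z τ (φ τ) - H z τ 0)| := by ring_nf
      _ ≤ |H z τ 0| + |H z τ (φ τ) - H z τ 0| := abs_add_le _ _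
      _ ≤ CH0 + W₂ * Kφ := add_le_add h1 (h2.trans h3)
  have hcapωmeas : ∀ z ∈ Icc (0:ℝ) b, AEStronglyMeasurable
      (fun τ => psiCaputo α ψ ψ' ω' τ) (volume.restrict (Ioo 0 z)) := fun z hz =>
    (aux_caputo_meas hα0 hα1 hψ_mono hψ_deriv hψ'_cont hψ'_pos hω'_cont).mono_measure
      (Measure.restrict_mono (Ioo_subset_Ioo_right hz.2) (le_refl _))
  have hcapvmeas : ∀ z ∈ Icc (0:ℝ) b, AEStronglyMeasurable
      (fun τ => psiCaputo α ψ ψ' v' τ) (volume.restrict (Ioo 0 z)) := fun z hz =>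
    (aux_caputo_meas hα0 hα1 hψ_mono hψ_deriv hψ'_cont hψ'_pos hv'_cont).mono_measure
      (Measure.restrict_mono (Ioo_subset_Ioo_right hz.2) (le_refl _))
  have hkey : ∀ z ∈ Icc (0:ℝ) b, |e z| ≤ ρ z + c * E z := by
    intro z hz
    set Hω : ℝ → ℝ := fun τ => H z τ (psiCaputo α ψ ψ' ω' τ) with hHω
    set Hv : ℝ → ℝ := fun τ => H z τ (psiCaputo α ψ ψ' v' τ) with hHv
    have hHωmeas : AEStronglyMeasurable Hω (volume.restrict (Ioo 0 z)) :=
      aux_H_meas hH_cont hz.1 hz.2 (hcapωmeas z hz)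
    have hHvmeas : AEStronglyMeasurable Hv (volume.restrict (Ioo 0 z)) :=
      aux_H_meas hH_cont hz.1 hz.2 (hcapvmeas z hz)
    have hHωbd : ∀ τ ∈ Ioo (0:ℝ) z, |Hω τ| ≤ CH0 + W₂ * Kω := fun τ hτ =>
      hHb z hz _ Kω hKωb τ ⟨hτ.1.le, hτ.2.le.trans hz.2⟩
    have hHvbd : ∀ τ ∈ Ioo (0:ℝ) z, |Hv τ| ≤ CH0 + W₂ * Kv := fun τ hτ =>
      hHb z hz _ Kv hKvb τ ⟨hτ.1.le, hτ.2.le.trans hz.2⟩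
    have hIHω := aux_psiInt_integrable hα0 hα1 hψ_mono hψ_deriv hψ'_cont hm0 hm
      hz.1 hz.2 hHωmeas hHωbd
    have hIHv := aux_psiInt_integrable hα0 hα1 hψ_mono hψ_deriv hψ'_cont hm0 hm
      hz.1 hz.2 hHvmeas hHvbd
    -- psiInt difference
    have hIsub : psiInt α ψ ψ' Hω z - psiInt α ψ ψ' Hv z =
        psiInt α ψ ψ' (fun τ => Hω τ - Hv τ) z := by
      rw [aux_psiInt_Ioo hz.1, aux_psiInt_Ioo hz.1, aux_psiInt_Ioo hz.1, ← mul_sub]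
      congr 1
      rw [← MeasureTheory.integral_sub hIHω hIHv]
      refine (setIntegral_congr_fun measurableSet_Ioo (fun κ hκ => ?_)).symm
      ring
    have hIsubint : IntegrableOn
        (fun κ => ψ' κ * (ψ z - ψ κ) ^ (α - 1) * |Hω κ - Hv κ|) (Ioo 0 z) :=
      aux_psiInt_integrable hα0 hα1 hψ_mono hψ_deriv hψ'_cont hm0 hm hz.1 hz.2
        ((hHωmeas.sub hHvmeas).norm.congr (by
          filter_upwards with κ using (Real.norm_eq_abs _)))
        (C := (CH0 + W₂ * Kω) + (CH0 + W₂ * Kv)) (fun κ hκ => by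
          rw [abs_abs]
          exact (abs_sub _ _).trans (add_le_add (hHωbd κ hκ) (hHvbd κ hκ)))
    have hIke : IntegrableOn
        (fun κ => ψ' κ * (ψ z - ψ κ) ^ (α - 1) * (k z * |e κ|)) (Ioo 0 z) :=
      aux_psiInt_integrable hα0 hα1 hψ_mono hψ_deriv hψ'_cont hm0 hm hz.1 hz.2
        (((hemeas z hz).norm.congr (by
          filter_upwards with κ using (Real.norm_eq_abs _))).const_mul (k z))
        (C := |k z| * K) (fun κ hκ => by
          rw [abs_mul, abs_abs]
          exact mul_le_mul_of_nonneg_left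
            (hKe κ ⟨hκ.1.le, hκ.2.le.trans hz.2⟩) (abs_nonneg _))
    have habsId : |psiInt α ψ ψ' Hω z - psiInt α ψ ψ' Hv z| ≤ W₂ * E z := by
      rw [hIsub]
      calc |psiInt α ψ ψ' (fun τ => Hω τ - Hv τ) z|
          ≤ psiInt α ψ ψ' (fun τ => |Hω τ - Hv τ|) z :=
            aux_psiInt_abs hα0 hψ_mono hψ'_pos hz.1 hz.2 _
        _ ≤ psiInt α ψ ψ' (fun τ => k z * |e τ|) z := by
            refine aux_psiInt_mono hα0 hψ_mono hψ'_pos hz.1 hz.2 hIsubint hIke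
              (fun τ hτ => ?_)
            have := hQ2 z hz τ ⟨hτ.1.le, hτ.2.le.trans hz.2⟩
              (psiCaputo α ψ ψ' ω' τ) (psiCaputo α ψ ψ' v' τ)
            exact this
        _ = k z * E z := by
            rw [hEdef]
            simp only []
            rw [aux_psiInt_Ioo hz.1, aux_psiInt_Ioo hz.1]
            rw [show ∫ κ in Ioo (0:ℝ) z, ψ' κ * (ψ z - ψ κ) ^ (α - 1) * (k z * |e κ|)
                = k z * ∫ κ in Ioo (0:ℝ) z, ψ' κ * (ψ z - ψ κ) ^ (α - 1) * |e κ| from by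
              rw [← MeasureTheory.integral_const_mul]
              exact setIntegral_congr_fun measurableSet_Ioo (fun κ hκ => by ring)]
            ring
        _ ≤ W₂ * E z := mul_le_mul_of_nonneg_right
            ((le_abs_self _).trans (hW₂_ge z hz)) (hE0 z hz)
    have he : e z = psiCaputo α ψ ψ' ω' z - psiCaputo α ψ ψ' v' z := rfl
    have hsol := hv_sol z hz
    have h1 : |e z| ≤ |psiCaputo α ψ ψ' ω' z - F z (ω z) (psiInt α ψ ψ' Hω z)| +
        |F z (ω z) (psiInt α ψ ψ' Hω z) - F z (v z) (psiInt α ψ ψ' Hv z)| := by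
      rw [he, hsol]
      exact abs_sub_le _ _ _
    have h2 := hω_approx z hz
    have h3 := hQ1 z hz (ω z) (psiInt α ψ ψ' Hω z) (v z) (psiInt α ψ ψ' Hv z)
    have h4 : n z * (|ω z - v z| + |psiInt α ψ ψ' Hω z - psiInt α ψ ψ' Hv z|)
        ≤ W₁ * (E z + W₂ * E z) := by
      calc n z * (|ω z - v z| + |psiInt α ψ ψ' Hω z - psiInt α ψ ψ' Hv z|)
          ≤ W₁ * (|ω z - v z| + |psiInt α ψ ψ' Hω z - psiInt α ψ ψ' Hv z|) :=
            mul_le_mul_of_nonneg_right ((le_abs_self _).trans (hW₁_ge z hz))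
              (by positivity)
        _ ≤ W₁ * (E z + W₂ * E z) := mul_le_mul_of_nonneg_left
            (add_le_add (habs_uE z hz) habsId) hW₁0
    calc |e z| ≤ |psiCaputo α ψ ψ' ω' z - F z (ω z) (psiInt α ψ ψ' Hω z)| +
        |F z (ω z) (psiInt α ψ ψ' Hω z) - F z (v z) (psiInt α ψ ψ' Hv z)| := h1
      _ ≤ ρ z + W₁ * (E z + W₂ * E z) := add_le_add h2 (h3.trans h4)
      _ = ρ z + c * E z := by rw [hcdef]; ring
  -- Bielecki weight argument
  set lam : ℝ := (c + 1) ^ (α⁻¹) with hlamdef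
  have hlam0 : 0 < lam := Real.rpow_pos_of_pos (by linarith) _
  have hlam_pow : lam ^ (-α) = (c + 1)⁻¹ := by
    rw [hlamdef, ← Real.rpow_mul (by linarith : (0:ℝ) ≤ c + 1),
      show α⁻¹ * -α = -1 from by field_simp, Real.rpow_neg_one]
  set w : ℝ → ℝ := fun x => Real.exp (lam * ψ x) with hwdef
  have hw_pos : ∀ x, 0 < w x := fun x => Real.exp_pos _
  set g0 : ℝ → ℝ := fun x => (|e x| - θ * ρ x) * Real.exp (-(lam * ψ x)) with hg0def
  set M : ℝ := sSup (g0 '' Icc 0 b) with hMdef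
  have hne : (g0 '' Icc 0 b).Nonempty := ⟨g0 0, 0, h0b, rfl⟩
  have hbdd : BddAbove (g0 '' Icc 0 b) := by
    refine ⟨K * Real.exp (-(lam * ψ 0)), ?_⟩
    rintro y ⟨x, hx, rfl⟩
    have hA : |e x| - θ * ρ x ≤ K := by
      have := hρ_nonneg x hx
      have := hKe x hx
      nlinarith [hθ0.le]
    have hEx : Real.exp (-(lam * ψ x)) ≤ Real.exp (-(lam * ψ 0)) := by
      refine Real.exp_le_exp.2 (neg_le_neg ?_)
      exact mul_le_mul_of_nonneg_left ((hψ_mono.monotoneOn) h0b hx hx.1) hlam0.le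
    calc g0 x ≤ K * Real.exp (-(lam * ψ x)) :=
          mul_le_mul_of_nonneg_right hA (Real.exp_nonneg _)
      _ ≤ K * Real.exp (-(lam * ψ 0)) := mul_le_mul_of_nonneg_left hEx hK0
  have hM_ub : ∀ x ∈ Icc (0:ℝ) b, |e x| ≤ θ * ρ x + M * w x := by
    intro x hx
    have h := le_csSup hbdd ⟨x, hx, rfl⟩
    have h2 : g0 x * w x ≤ M * w x := mul_le_mul_of_nonneg_right h (hw_pos x).le
    have h3 : g0 x * w x = |e x| - θ * ρ x := by
      rw [hg0def, hwdef]
      simp only []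
      rw [mul_assoc, ← Real.exp_add, show -(lam * ψ x) + lam * ψ x = 0 from by ring,
        Real.exp_zero, mul_one]
    linarith [h2, h3.symm.le, h3.le]
  set Mp : ℝ := max M 0 with hMpdef
  have hMp0 : 0 ≤ Mp := le_max_right _ _
  have hMMp : M ≤ Mp := le_max_left _ _
  obtain ⟨Cρ, hCρ⟩ := isCompact_Icc.exists_bound_of_continuousOn hρ_cont
  set Cw : ℝ := Real.exp (lam * ψ b) with hCwdef
  have hwb : ∀ x ∈ Icc (0:ℝ) b, w x ≤ Cw := fun x hx =>
    Real.exp_le_exp.2 (mul_le_mul_of_nonneg_left ((hψ_mono.monotoneOn) hx hbb hx.2) hlam0.le)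
  have hIρ : ∀ z ∈ Icc (0:ℝ) b, IntegrableOn
      (fun κ => ψ' κ * (ψ z - ψ κ) ^ (α - 1) * ρ κ) (Ioo 0 z) := fun z hz =>
    aux_psiInt_integrable hα0 hα1 hψ_mono hψ_deriv hψ'_cont hm0 hm hz.1 hz.2
      ((hρ_cont.mono (fun x hx => ⟨hx.1.le, hx.2.le.trans hz.2⟩)).aestronglyMeasurable
        measurableSet_Ioo)
      (C := Cρ) (fun κ hκ => by
        rw [← Real.norm_eq_abs]; exact hCρ κ ⟨hκ.1.le, hκ.2.le.trans hz.2⟩)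
  have hIw : ∀ z ∈ Icc (0:ℝ) b, IntegrableOn
      (fun κ => ψ' κ * (ψ z - ψ κ) ^ (α - 1) * w κ) (Ioo 0 z) := fun z hz =>
    aux_psiInt_integrable hα0 hα1 hψ_mono hψ_deriv hψ'_cont hm0 hm hz.1 hz.2
      ((Real.continuous_exp.comp_continuousOn
        ((continuousOn_const.mul hψc).mono (fun x hx => ⟨hx.1.le, hx.2.le.trans hz.2⟩))).aestronglyMeasurable
        measurableSet_Ioo)
      (C := Cw) (fun κ hκ => by
        rw [abs_of_pos (hw_pos κ)]
        exact hwb κ ⟨hκ.1.le, hκ.2.le.trans hz.2⟩)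
  have hstep : ∀ z ∈ Icc (0:ℝ) b, E z ≤ θ * (γ * ρ z) + Mp * ((c + 1)⁻¹ * w z) := by
    intro z hz
    have hIcomb : IntegrableOn
        (fun κ => ψ' κ * (ψ z - ψ κ) ^ (α - 1) * (θ * ρ κ + Mp * w κ)) (Ioo 0 z) := by
      have hadd := ((hIρ z hz).const_mul θ).add ((hIw z hz).const_mul Mp)
      refine IntegrableOn.congr_fun hadd (fun κ hκ => ?_) measurableSet_Ioo
      simp only [Pi.add_apply]
      ring
    have h1 : E z ≤ psiInt α ψ ψ' (fun τ => θ * ρ τ + Mp * w τ) z := by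
      refine aux_psiInt_mono hα0 hψ_mono hψ'_pos hz.1 hz.2 (hIe z hz) hIcomb
        (fun τ hτ => ?_)
      have hmem : τ ∈ Icc (0:ℝ) b := ⟨hτ.1.le, hτ.2.le.trans hz.2⟩
      have := hM_ub τ hmem
      have hMw : M * w τ ≤ Mp * w τ := mul_le_mul_of_nonneg_right hMMp (hw_pos τ).le
      linarith
    have h2 : psiInt α ψ ψ' (fun τ => θ * ρ τ + Mp * w τ) z =
        θ * psiInt α ψ ψ' ρ z + Mp * psiInt α ψ ψ' w z := by
      rw [aux_psiInt_Ioo hz.1, aux_psiInt_Ioo hz.1, aux_psiInt_Ioo hz.1]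
      rw [show ∫ κ in Ioo (0:ℝ) z, ψ' κ * (ψ z - ψ κ) ^ (α - 1) * (θ * ρ κ + Mp * w κ)
          = θ * (∫ κ in Ioo (0:ℝ) z, ψ' κ * (ψ z - ψ κ) ^ (α - 1) * ρ κ)
            + Mp * ∫ κ in Ioo (0:ℝ) z, ψ' κ * (ψ z - ψ κ) ^ (α - 1) * w κ from by
        rw [← MeasureTheory.integral_const_mul, ← MeasureTheory.integral_const_mul,
          ← MeasureTheory.integral_add ((hIρ z hz).const_mul θ) ((hIw z hz).const_mul Mp)]
        exact setIntegral_congr_fun measurableSet_Ioo (fun κ hκ => by ring)]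
      ring
    have h3 : psiInt α ψ ψ' w z ≤ lam ^ (-α) * w z :=
      aux_exp_bound hα0 hα1 hψ_mono hψ_deriv hψ'_pos hlam0 hz.1 hz.2
    have h4 : psiInt α ψ ψ' ρ z ≤ γ * ρ z := hQ3 z hz
    calc E z ≤ θ * psiInt α ψ ψ' ρ z + Mp * psiInt α ψ ψ' w z := by rw [← h2]; exact h1
      _ ≤ θ * (γ * ρ z) + Mp * (lam ^ (-α) * w z) :=
          add_le_add (mul_le_mul_of_nonneg_left h4 hθ0.le)
            (mul_le_mul_of_nonneg_left (h3.trans (le_of_eq rfl)) hMp0)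
      _ = θ * (γ * ρ z) + Mp * ((c + 1)⁻¹ * w z) := by rw [hlam_pow]
  have hM_le : M ≤ (c / (c + 1)) * Mp := by
    refine csSup_le hne ?_
    rintro y ⟨x, hx, rfl⟩
    have h1 := hkey x hx
    have h2 := hstep x hx
    have hone : 1 + c * (θ * γ) = θ := by
      rw [hθdef]
      field_simp
      ring
    have h3 : |e x| ≤ θ * ρ x + (c / (c + 1)) * Mp * w x := by
      have hc1 : (0:ℝ) < c + 1 := by linarith
      calc |e x| ≤ ρ x + c * E x := h1
        _ ≤ ρ x + c * (θ * (γ * ρ x) + Mp * ((c + 1)⁻¹ * w x)) :=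
            add_le_add (le_refl _) (mul_le_mul_of_nonneg_left h2 hc0)
        _ = (1 + c * (θ * γ)) * ρ x + (c / (c + 1)) * Mp * w x := by
            rw [div_eq_mul_inv]; ring
        _ = θ * ρ x + (c / (c + 1)) * Mp * w x := by rw [hone]
    have h4 : g0 x ≤ ((c / (c + 1)) * Mp * w x) * Real.exp (-(lam * ψ x)) := by
      rw [hg0def]
      exact mul_le_mul_of_nonneg_right (by linarith) (Real.exp_nonneg _)
    calc g0 x ≤ ((c / (c + 1)) * Mp * w x) * Real.exp (-(lam * ψ x)) := h4
      _ = (c / (c + 1)) * Mp := by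
          rw [hwdef]
          simp only []
          rw [mul_assoc, ← Real.exp_add, show lam * ψ x + -(lam * ψ x) = 0 from by ring,
            Real.exp_zero, mul_one]
  have hM0 : M ≤ 0 := by
    by_contra h
    push_neg at h
    have hMpM : Mp = M := max_eq_left h.le
    rw [hMpM] at hM_le
    have hfrac : c / (c + 1) < 1 := (div_lt_one (by linarith)).2 (by linarith)
    nlinarith
  have hMp_eq : Mp = 0 := max_eq_right hM0
  intro z hz
  calc |ω z - v z| ≤ E z := habs_uE z hz
    _ ≤ θ * (γ * ρ z) + Mp * ((c + 1)⁻¹ * w z) := hstep z hz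
    _ = θ * γ * ρ z := by rw [hMp_eq]; ring
    _ = γ / (1 - c * γ) * ρ z := by rw [hθdef, div_eq_mul_inv]; ring
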